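/- arXiv:2301.00398 — 3 statements merged into one kernel-verified Lean document; each statement's English description precedes it below -/
import Mathlib

section
/- Let d = 2 and α = 2, and let φ(θ) = Σ_{x∈ℤ², x≠0} cos(θ·x) s(x). Then there exist a constant C > 1 and δ > 0 such that for every θ ∈ ℝ² with 0 < ‖θ‖ < δ, C^{-1} ‖θ‖² |log ‖θ‖| ≤ 1 − φ(θ) ≤ C ‖θ‖² |log ‖θ‖|. -/
open scoped Classical

/-- Euclidean norm of a point of `ℤ²`. -/
noncomputable def znorm2 (z : Fin 2 → ℤ) : ℝ :=
  Real.sqrt (∑ i, ((z i : ℝ)) ^ 2)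

/-- The normalizing constant `s* = Σ_{x∈ℤ², x≠0} ‖x‖^{-(2+α)}`. -/
noncomputable def sstar2 (α : ℝ) : ℝ :=
  ∑' x : Fin 2 → ℤ, if x = 0 then 0 else znorm2 x ^ (-(2 + α))

/-- The step distribution `s(x) = ‖x‖^{-(2+α)}/s*` on `ℤ²`, `s(0) = 0`. -/
noncomputable def sfun2 (α : ℝ) (x : Fin 2 → ℤ) : ℝ :=
  if x = 0 then 0 else znorm2 x ^ (-(2 + α)) / sstar2 α

/-- The characteristic function `φ(θ) = Σ_{x≠0} cos(θ·x) s(x)` for `θ ∈ ℝ²`. -/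
noncomputable def phi2 (α : ℝ) (θ : EuclideanSpace ℝ (Fin 2)) : ℝ :=
  ∑' x : Fin 2 → ℤ, Real.cos (∑ i, θ i * (x i : ℝ)) * sfun2 α x

/-- `f_v(u) = (1/s*) (1 − cos(v·u))/‖u‖^{2+α}` for `u ≠ 0` (set to `0` at `u = 0`). -/
noncomputable def fv (α : ℝ) (v u : EuclideanSpace ℝ (Fin 2)) : ℝ :=
  if u = 0 then 0
  else (sstar2 α)⁻¹ * (1 - Real.cos ((inner ℝ v u : ℝ))) / ‖u‖ ^ (2 + α)

namespace St14

open Finset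

abbrev Z2 := Fin 2 → ℤ

def Q (x : Z2) : ℤ := x 0 ^ 2 + x 1 ^ 2

def mx (x : Z2) : ℕ := max (x 0).natAbs (x 1).natAbs

noncomputable def box (N : ℕ) : Finset Z2 :=
  Fintype.piFinset fun _ => Finset.Icc (-(N : ℤ)) (N : ℤ)

noncomputable def ann (k : ℕ) : Finset Z2 := box k \ box (k - 1)

lemma mem_box {N : ℕ} {x : Z2} : x ∈ box N ↔ mx x ≤ N := by
  simp only [box, Fintype.mem_piFinset, Finset.mem_Icc, mx, max_le_iff, Fin.forall_fin_two]
  omega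

lemma mx_eq_zero {x : Z2} : mx x = 0 ↔ x = 0 := by
  simp only [mx, Nat.max_eq_zero_iff, Int.natAbs_eq_zero, funext_iff, Fin.forall_fin_two,
    Pi.zero_apply]

lemma Q_lb (x : Z2) : (mx x : ℤ) ^ 2 ≤ Q x := by
  have h0 : ((x 0).natAbs : ℤ) ^ 2 = x 0 ^ 2 := Int.natAbs_pow_two _
  have h1 : ((x 1).natAbs : ℤ) ^ 2 = x 1 ^ 2 := Int.natAbs_pow_two _
  have hm : mx x = (x 0).natAbs ∨ mx x = (x 1).natAbs := max_choice _ _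
  have hsq0 : (0:ℤ) ≤ x 0 ^ 2 := sq_nonneg _
  have hsq1 : (0:ℤ) ≤ x 1 ^ 2 := sq_nonneg _
  rcases hm with hm | hm <;> rw [Q, hm] <;> [rw [h0]; rw [h1]] <;> linarith

lemma Q_ub (x : Z2) : Q x ≤ 2 * (mx x : ℤ) ^ 2 := by
  have h0 : ((x 0).natAbs : ℤ) ^ 2 = x 0 ^ 2 := Int.natAbs_pow_two _
  have h1 : ((x 1).natAbs : ℤ) ^ 2 = x 1 ^ 2 := Int.natAbs_pow_two _
  have e0 : ((x 0).natAbs : ℤ) ^ 2 ≤ (mx x : ℤ) ^ 2 := by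
    have : ((x 0).natAbs : ℤ) ≤ (mx x : ℤ) := by exact_mod_cast le_max_left _ _
    exact pow_le_pow_left₀ (by positivity) this 2
  have e1 : ((x 1).natAbs : ℤ) ^ 2 ≤ (mx x : ℤ) ^ 2 := by
    have : ((x 1).natAbs : ℤ) ≤ (mx x : ℤ) := by exact_mod_cast le_max_right _ _
    exact pow_le_pow_left₀ (by positivity) this 2
  rw [Q]; linarith [h0 ▸ e0, h1 ▸ e1]

lemma Q_pos {x : Z2} (hx : x ≠ 0) : 1 ≤ Q x := by
  have h : 1 ≤ mx x := by
    rcases Nat.eq_zero_or_pos (mx x) with h | h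
    · exact absurd (mx_eq_zero.mp h) hx
    · exact h
  have := Q_lb x
  nlinarith [this, (by exact_mod_cast h : (1:ℤ) ≤ (mx x : ℤ))]

lemma card_box (N : ℕ) : (box N).card = (2 * N + 1) ^ 2 := by
  simp only [box, Fintype.card_piFinset, Int.card_Icc]
  have : ((N : ℤ) + 1 - -(N : ℤ)).toNat = 2 * N + 1 := by omega
  rw [this]
  simp [Finset.prod_const, sq]

lemma card_ann {k : ℕ} (hk : 1 ≤ k) : (ann k).card = 8 * k := by
  have hsub : box (k - 1) ⊆ box k := by
    intro x hx; rw [mem_box] at *; omega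
  rw [ann, card_sdiff_of_subset hsub, card_box, card_box]
  obtain ⟨j, rfl⟩ := Nat.exists_eq_add_of_le hk
  have h1 : 1 + j - 1 = j := by omega
  rw [h1]
  have : (2 * (1 + j) + 1) ^ 2 = (2 * j + 1) ^ 2 + 8 * (1 + j) := by ring
  omega

lemma mem_ann {k : ℕ} (hk : 1 ≤ k) {x : Z2} : x ∈ ann k ↔ mx x = k := by
  rw [ann, mem_sdiff, mem_box, mem_box]; omega

lemma ann_ne_zero {k : ℕ} (hk : 1 ≤ k) {x : Z2} (hx : x ∈ ann k) : x ≠ 0 := by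
  rw [mem_ann hk] at hx
  intro h; rw [← mx_eq_zero] at h; omega

lemma sum_boxdiff (f : Z2 → ℝ) (N : ℕ) :
    ∀ M : ℕ, ∑ x ∈ box M \ box N, f x = ∑ k ∈ Ioc N M, ∑ x ∈ ann k, f x := by
  intro M
  induction M with
  | zero =>
    have h1 : box 0 \ box N = ∅ := by
      rw [Finset.sdiff_eq_empty_iff_subset]
      intro x hx; rw [mem_box] at *; omega
    have h2 : Ioc N 0 = ∅ := by simp
    rw [h1, h2]; simp
  | succ M ih =>
    by_cases h : M + 1 ≤ N
    · have h1 : box (M+1) \ box N = ∅ := by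
        rw [Finset.sdiff_eq_empty_iff_subset]
        intro x hx; rw [mem_box] at *; omega
      have h2 : Ioc N (M+1) = ∅ := by
        rw [Finset.Ioc_eq_empty_iff]; omega
      rw [h1, h2]; simp
    · push_neg at h
      have hNM : N ≤ M := by omega
      have hset : box (M+1) \ box N = (box M \ box N) ∪ ann (M+1) := by
        ext x
        simp only [mem_sdiff, mem_union, mem_box, ann, Nat.add_sub_cancel]
        omega
      have hdisj : Disjoint (box M \ box N) (ann (M+1)) := by
        rw [Finset.disjoint_left]
        intro x hx hx2
        rw [mem_sdiff, mem_box, mem_box] at hx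
        rw [mem_ann (by omega)] at hx2
        omega
      rw [hset, Finset.sum_union hdisj, ih, Finset.sum_Ioc_succ_top hNM]

lemma box_zero : box 0 = {0} := by
  ext x
  rw [mem_box, Finset.mem_singleton, ← mx_eq_zero]
  omega

lemma sum_box0 (f : Z2 → ℝ) (M : ℕ) :
    ∑ x ∈ box M \ {0}, f x = ∑ k ∈ Ioc 0 M, ∑ x ∈ ann k, f x := by
  rw [← box_zero, sum_boxdiff]

lemma sum_ann_le {k : ℕ} (hk : 1 ≤ k) (f : Z2 → ℝ) (c : ℝ)
    (h : ∀ x ∈ ann k, f x ≤ c) : ∑ x ∈ ann k, f x ≤ 8 * k * c := by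
  calc ∑ x ∈ ann k, f x ≤ (ann k).card • c := Finset.sum_le_card_nsmul _ _ _ h
  _ = 8 * k * c := by rw [card_ann hk, nsmul_eq_mul]; push_cast; ring

lemma sum_ann_ge {k : ℕ} (hk : 1 ≤ k) (f : Z2 → ℝ) (c : ℝ)
    (h : ∀ x ∈ ann k, c ≤ f x) : 8 * k * c ≤ ∑ x ∈ ann k, f x := by
  calc (8 * k * c : ℝ) = (ann k).card • c := by rw [card_ann hk, nsmul_eq_mul]; push_cast; ring
  _ ≤ ∑ x ∈ ann k, f x := Finset.card_nsmul_le_sum _ _ _ h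

lemma znorm_eq (x : Z2) : znorm2 x = Real.sqrt ((Q x : ℝ)) := by
  rw [znorm2, Fin.sum_univ_two, Q]
  push_cast
  ring_nf

lemma Qr_pos {x : Z2} (hx : x ≠ 0) : (0:ℝ) < (Q x : ℝ) := by
  have := Q_pos hx; exact_mod_cast lt_of_lt_of_le zero_lt_one (by exact_mod_cast this)

lemma zpow_eq {x : Z2} (hx : x ≠ 0) :
    znorm2 x ^ (-(2 + (2:ℝ))) = ((Q x : ℝ) ^ 2)⁻¹ := by
  have hq : (0:ℝ) < (Q x : ℝ) := Qr_pos hx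
  rw [znorm_eq]
  have h4 : (-(2 + (2:ℝ))) = -((4:ℕ):ℝ) := by norm_num
  rw [h4, Real.rpow_neg (Real.sqrt_nonneg _), Real.rpow_natCast]
  congr 1
  rw [show (4:ℕ) = 2 * 2 from rfl, pow_mul, Real.sq_sqrt hq.le]

noncomputable def G (x : Z2) : ℝ := if x = 0 then 0 else ((Q x : ℝ) ^ 2)⁻¹

lemma G_nonneg : 0 ≤ G := by
  intro x
  simp only [G, Pi.zero_apply]
  split_ifs
  · exact le_rfl
  · positivity

lemma sum_ann_G_le {k : ℕ} (hk : 1 ≤ k) : ∑ x ∈ ann k, G x ≤ 8 * ((k:ℝ)^3)⁻¹ := by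
  have hc : ∀ x ∈ ann k, G x ≤ ((k:ℝ)^4)⁻¹ := by
    intro x hxm
    have hx : x ≠ 0 := ann_ne_zero hk hxm
    have hmx : mx x = k := (mem_ann hk).mp hxm
    have hq : (k:ℝ)^2 ≤ (Q x : ℝ) := by
      have := Q_lb x; rw [hmx] at this; exact_mod_cast this
    have hkpos : (0:ℝ) < (k:ℝ) := by exact_mod_cast hk
    rw [G, if_neg hx]
    have h2 : (k:ℝ)^4 ≤ (Q x:ℝ)^2 := by nlinarith
    exact inv_anti₀ (by positivity) h2
  calc ∑ x ∈ ann k, G x ≤ 8 * k * ((k:ℝ)^4)⁻¹ := sum_ann_le hk _ _ hc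
  _ = 8 * ((k:ℝ)^3)⁻¹ := by
      have hkpos : (0:ℝ) < (k:ℝ) := by exact_mod_cast hk
      field_simp

lemma tele {N : ℕ} (hN : 1 ≤ N) (M : ℕ) :
    ∑ k ∈ Finset.Ioc N M, ((k:ℝ)^3)⁻¹ ≤ ((N:ℝ)^2)⁻¹ := by
  rcases le_or_gt N M with hNM | hNM
  · have key : ∀ m : ℕ, N ≤ m →
        ∑ k ∈ Finset.Ioc N m, ((k:ℝ)^3)⁻¹ ≤ ((N:ℝ)^2)⁻¹ - ((m:ℝ)^2)⁻¹ := by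
      intro m hm
      induction m, hm using Nat.le_induction with
      | base => simp
      | succ m hm ih =>
        rw [Finset.sum_Ioc_succ_top hm]
        have hm1 : (1:ℝ) ≤ (m:ℝ) := by
          have : 1 ≤ m := le_trans hN hm; exact_mod_cast this
        have hstep : (((m:ℕ)+1:ℝ)^3)⁻¹ ≤ ((m:ℝ)^2)⁻¹ - (((m:ℝ)+1)^2)⁻¹ := by
          have e : ((m:ℝ)^2)⁻¹ - (((m:ℝ)+1)^2)⁻¹
              = (2*(m:ℝ)+1) / ((m:ℝ)^2 * ((m:ℝ)+1)^2) := by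
            field_simp
            ring
          rw [inv_eq_one_div, e, div_le_div_iff₀ (by positivity) (by positivity)]
          nlinarith
        push_cast
        push_cast at ih hstep
        linarith
    have h := key M hNM
    have : (0:ℝ) ≤ ((M:ℝ)^2)⁻¹ := by positivity
    linarith
  · rw [Finset.Ioc_eq_empty (by omega)]
    simp only [Finset.sum_empty]
    positivity


lemma sum_G_boxdiff {N : ℕ} (hN : 1 ≤ N) (M : ℕ) :
    ∑ x ∈ box M \ box N, G x ≤ 8 * ((N:ℝ)^2)⁻¹ := by
  rw [sum_boxdiff]
  calc ∑ k ∈ Finset.Ioc N M, ∑ x ∈ ann k, G x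
      ≤ ∑ k ∈ Finset.Ioc N M, 8 * ((k:ℝ)^3)⁻¹ := by
        apply Finset.sum_le_sum
        intro k hk
        exact sum_ann_G_le (by have := (Finset.mem_Ioc.mp hk).1; omega)
  _ = 8 * ∑ k ∈ Finset.Ioc N M, ((k:ℝ)^3)⁻¹ := by rw [Finset.mul_sum]
  _ ≤ 8 * ((N:ℝ)^2)⁻¹ := by
      have := tele hN M
      linarith

lemma sum_G_box (M : ℕ) : ∑ x ∈ box M \ {0}, G x ≤ 16 := by
  rw [sum_box0]
  rcases Nat.eq_zero_or_pos M with rfl | hM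
  · simp
  have hsplit : ∑ k ∈ Finset.Ioc 0 M, ∑ x ∈ ann k, G x
      = (∑ k ∈ Finset.Ioc 0 1, ∑ x ∈ ann k, G x) + ∑ k ∈ Finset.Ioc 1 M, ∑ x ∈ ann k, G x := by
    rw [Finset.sum_Ioc_consecutive _ (by omega) (by omega)]
  rw [hsplit]
  have h1 : ∑ k ∈ Finset.Ioc 0 1, ∑ x ∈ ann k, G x ≤ 8 := by
    rw [show Finset.Ioc 0 1 = {1} from rfl, Finset.sum_singleton]
    have := sum_ann_G_le (k := 1) le_rfl
    norm_num at this
    exact this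
  have h2 : ∑ k ∈ Finset.Ioc 1 M, ∑ x ∈ ann k, G x ≤ 8 := by
    calc ∑ k ∈ Finset.Ioc 1 M, ∑ x ∈ ann k, G x
        ≤ ∑ k ∈ Finset.Ioc 1 M, 8 * ((k:ℝ)^3)⁻¹ := by
          apply Finset.sum_le_sum
          intro k hk
          exact sum_ann_G_le (by have := (Finset.mem_Ioc.mp hk).1; omega)
    _ = 8 * ∑ k ∈ Finset.Ioc 1 M, ((k:ℝ)^3)⁻¹ := by rw [Finset.mul_sum]
    _ ≤ 8 * ((1:ℕ):ℝ)⁻¹ := by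
        have := tele (le_refl 1) M
        norm_num at this ⊢
        linarith
    _ = 8 := by norm_num
  linarith

lemma sum_G_finset (u : Finset Z2) : ∑ x ∈ u, G x ≤ 16 := by
  set M := u.sup mx with hM
  have h1 : ∑ x ∈ u, G x = ∑ x ∈ u \ {0}, G x := by
    rw [eq_comm]
    apply Finset.sum_subset (Finset.sdiff_subset)
    intro x hx hx2
    have : x = 0 := by
      by_contra h
      exact hx2 (Finset.mem_sdiff.mpr ⟨hx, by simpa using h⟩)
    rw [this, G, if_pos rfl]
  rw [h1]
  calc ∑ x ∈ u \ {0}, G x ≤ ∑ x ∈ box M \ {0}, G x := by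
        apply Finset.sum_le_sum_of_subset_of_nonneg
        · intro x hx
          rw [Finset.mem_sdiff] at hx ⊢
          exact ⟨mem_box.mpr (Finset.le_sup hx.1), hx.2⟩
        · intro x _ _; exact G_nonneg x
  _ ≤ 16 := sum_G_box M

lemma summable_G : Summable G :=
  summable_of_sum_le G_nonneg sum_G_finset

lemma sstar_eq : sstar2 2 = ∑' x, G x := by
  rw [sstar2]
  apply tsum_congr
  intro x
  rw [G]
  split_ifs with h
  · rfl
  · exact zpow_eq h

lemma sstar_pos : 0 < sstar2 2 := by
  rw [sstar_eq]
  have he : (![1, 0] : Z2) ≠ 0 := by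
    intro h
    have := congrFun h 0
    simp at this
  refine Summable.tsum_pos summable_G G_nonneg ![1, 0] ?_
  rw [G, if_neg he]
  have : Q ![1, 0] = 1 := by rw [Q]; simp
  rw [this]
  norm_num

lemma sfun_eq : sfun2 2 = fun x => G x / sstar2 2 := by
  funext x
  rw [sfun2, G]
  split_ifs with h
  · rw [zero_div]
  · rw [zpow_eq h]

lemma sfun_nonneg (x : Z2) : 0 ≤ sfun2 2 x := by
  rw [sfun_eq]
  exact div_nonneg (G_nonneg x) sstar_pos.le

lemma summable_sfun : Summable (sfun2 2) := by
  rw [sfun_eq]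
  exact summable_G.div_const _

lemma tsum_sfun : ∑' x, sfun2 2 x = 1 := by
  rw [sfun_eq, tsum_div_const, ← sstar_eq, div_self sstar_pos.ne']

noncomputable def H (N : ℕ) : ℝ := ∑ k ∈ Finset.Ioc 0 N, ((k:ℝ))⁻¹

lemma H_eq (N : ℕ) : H N = (harmonic N : ℝ) := by
  rw [H, harmonic_eq_sum_Icc, ← Finset.Icc_add_one_left_eq_Ioc]
  push_cast
  rfl

lemma H_le (N : ℕ) (hN : 1 ≤ N) : H N ≤ 1 + Real.log N := by
  rw [H_eq]; exact harmonic_le_one_add_log N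

lemma le_H (N : ℕ) : Real.log (N + 1) ≤ H N := by
  rw [H_eq]
  have := log_add_one_le_harmonic N
  push_cast at this ⊢
  exact this

noncomputable def Qinv (x : Z2) : ℝ := ((Q x : ℝ))⁻¹

lemma Qinv_nonneg (x : Z2) : 0 ≤ Qinv x := by
  rw [Qinv]
  rcases eq_or_ne x 0 with rfl | h
  · have : Q (0 : Z2) = 0 := by simp [Q]
    rw [this]; norm_num
  · exact (inv_nonneg).mpr (Qr_pos h).le

lemma sumQinv_ub {N : ℕ} (hN : 1 ≤ N) :
    ∑ x ∈ box N \ {0}, Qinv x ≤ 8 * (1 + Real.log N) := by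
  rw [sum_box0]
  calc ∑ k ∈ Finset.Ioc 0 N, ∑ x ∈ ann k, Qinv x
      ≤ ∑ k ∈ Finset.Ioc 0 N, 8 * ((k:ℝ))⁻¹ := by
        apply Finset.sum_le_sum
        intro k hk
        have hk1 : 1 ≤ k := (Finset.mem_Ioc.mp hk).1
        have hkpos : (0:ℝ) < (k:ℝ) := by exact_mod_cast hk1
        have hb : ∀ x ∈ ann k, Qinv x ≤ ((k:ℝ)^2)⁻¹ := by
          intro x hx
          have hmx : mx x = k := (mem_ann hk1).mp hx
          have hq : (k:ℝ)^2 ≤ (Q x : ℝ) := by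
            have := Q_lb x; rw [hmx] at this; exact_mod_cast this
          exact inv_anti₀ (by positivity) hq
        calc ∑ x ∈ ann k, Qinv x ≤ 8 * k * ((k:ℝ)^2)⁻¹ := sum_ann_le hk1 _ _ hb
        _ = 8 * ((k:ℝ))⁻¹ := by field_simp
  _ = 8 * H N := by rw [H, Finset.mul_sum]
  _ ≤ 8 * (1 + Real.log N) := by have := H_le N hN; linarith

lemma sumQinv_lb (N : ℕ) :
    4 * Real.log (N + 1) ≤ ∑ x ∈ box N \ {0}, Qinv x := by
  rw [sum_box0]
  calc (4 : ℝ) * Real.log (N+1) ≤ 4 * H N := by have := le_H N; linarith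
  _ = ∑ k ∈ Finset.Ioc 0 N, 4 * ((k:ℝ))⁻¹ := by rw [H, Finset.mul_sum]
  _ ≤ ∑ k ∈ Finset.Ioc 0 N, ∑ x ∈ ann k, Qinv x := by
      apply Finset.sum_le_sum
      intro k hk
      have hk1 : 1 ≤ k := (Finset.mem_Ioc.mp hk).1
      have hkpos : (0:ℝ) < (k:ℝ) := by exact_mod_cast hk1
      have hb : ∀ x ∈ ann k, (2*(k:ℝ)^2)⁻¹ ≤ Qinv x := by
        intro x hx
        have hmx : mx x = k := (mem_ann hk1).mp hx
        have hq : (Q x : ℝ) ≤ 2*(k:ℝ)^2 := by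
          have := Q_ub x; rw [hmx] at this; exact_mod_cast this
        exact inv_anti₀ (Qr_pos (ann_ne_zero hk1 hx)) hq
      calc (4:ℝ) * ((k:ℝ))⁻¹ = 8 * k * (2*(k:ℝ)^2)⁻¹ := by field_simp; ring
      _ ≤ ∑ x ∈ ann k, Qinv x := sum_ann_ge hk1 _ _ hb

lemma CS (θ : EuclideanSpace ℝ (Fin 2)) (x : Z2) :
    (∑ i, θ i * (x i : ℝ))^2 ≤ ‖θ‖^2 * (Q x : ℝ) := by
  have h1 := Finset.sum_mul_sq_le_sq_mul_sq Finset.univ (fun i => θ i) (fun i => ((x i : ℝ)))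
  have h2 : ‖θ‖^2 = ∑ i, θ i ^ 2 := by
    rw [EuclideanSpace.norm_eq, Real.sq_sqrt (by positivity)]
    congr 1
    funext i
    rw [Real.norm_eq_abs, sq_abs]
  have h3 : (Q x : ℝ) = ∑ i, ((x i : ℝ))^2 := by
    rw [Fin.sum_univ_two, Q]; push_cast; ring
  rw [h2, h3]
  exact h1

lemma cos_ub (t : ℝ) : 1 - Real.cos t ≤ t^2/2 := by
  have := Real.one_sub_sq_div_two_le_cos (x := t)
  linarith

lemma cos_ub2 (t : ℝ) : 1 - Real.cos t ≤ 2 := by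
  have := Real.neg_one_le_cos t
  linarith

lemma cos_lb {t : ℝ} (h : |t| ≤ 1) : t^2/4 ≤ 1 - Real.cos t := by
  have hb := Real.cos_bound h
  rw [abs_le] at hb
  have h4 : |t|^4 = t^4 := by
    rw [← abs_pow, abs_of_nonneg (by positivity)]
  rw [h4] at hb
  have ht2 : t^2 ≤ 1 := by
    have := abs_le.mp h
    nlinarith
  nlinarith [sq_nonneg t, sq_nonneg (t^2)]

def swapZ (x : Z2) : Z2 := ![x 1, x 0]
def neg0 (x : Z2) : Z2 := ![-(x 0), x 1]

lemma swapZ_apply0 (x : Z2) : swapZ x 0 = x 1 := rfl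
lemma swapZ_apply1 (x : Z2) : swapZ x 1 = x 0 := rfl
lemma neg0_apply0 (x : Z2) : neg0 x 0 = -(x 0) := rfl
lemma neg0_apply1 (x : Z2) : neg0 x 1 = x 1 := rfl

lemma Q_swapZ (x : Z2) : Q (swapZ x) = Q x := by
  rw [Q, Q, swapZ_apply0, swapZ_apply1]; ring

lemma Q_neg0 (x : Z2) : Q (neg0 x) = Q x := by
  rw [Q, Q, neg0_apply0, neg0_apply1]; ring

lemma mx_swapZ (x : Z2) : mx (swapZ x) = mx x := by
  rw [mx, mx, swapZ_apply0, swapZ_apply1]; exact max_comm _ _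

lemma mx_neg0 (x : Z2) : mx (neg0 x) = mx x := by
  rw [mx, mx, neg0_apply0, neg0_apply1, Int.natAbs_neg]

lemma swapZ_swapZ (x : Z2) : swapZ (swapZ x) = x := by
  funext i
  fin_cases i <;> rfl

lemma neg0_neg0 (x : Z2) : neg0 (neg0 x) = x := by
  funext i
  fin_cases i
  · show -(-(x 0)) = x 0; ring
  · rfl

lemma sym (θ : EuclideanSpace ℝ (Fin 2)) (N : ℕ) :
    ∑ x ∈ box N \ {0}, (∑ i, θ i * (x i : ℝ))^2 * ((Q x : ℝ)^2)⁻¹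
      = ‖θ‖^2 / 2 * ∑ x ∈ box N \ {0}, Qinv x := by
  classical
  set s : Finset Z2 := box N \ {0} with hs
  have hmem : ∀ x : Z2, x ∈ s ↔ mx x ≤ N ∧ x ≠ 0 := by
    intro x; rw [hs, Finset.mem_sdiff, mem_box, Finset.mem_singleton]
  set F : Z2 → ℝ := fun x => ((Q x : ℝ)^2)⁻¹ with hF
  -- swap invariance
  have hswapmem : ∀ x ∈ s, swapZ x ∈ s := by
    intro x hx
    rw [hmem] at hx ⊢
    refine ⟨by rw [mx_swapZ]; exact hx.1, ?_⟩
    intro h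
    apply hx.2
    rw [← swapZ_swapZ x, h]
    funext i; fin_cases i <;> rfl
  have hAB : ∑ x ∈ s, ((x 0 : ℝ))^2 * F x = ∑ x ∈ s, ((x 1 : ℝ))^2 * F x := by
    refine Finset.sum_nbij' swapZ swapZ hswapmem hswapmem
      (fun a _ => swapZ_swapZ a) (fun a _ => swapZ_swapZ a) ?_
    intro a _
    rw [hF]
    simp only [swapZ_apply1, Q_swapZ]
  have hC : ∑ x ∈ s, ((x 0 : ℝ) * (x 1 : ℝ)) * F x = 0 := by
    refine Finset.sum_involution (fun a _ => neg0 a) ?_ ?_ ?_ ?_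
    · intro a ha
      have : Q (neg0 a) = Q a := Q_neg0 a
      rw [hF]
      simp only [neg0_apply0, neg0_apply1, this]
      push_cast
      ring
    · intro a ha hfa
      intro h
      apply hfa
      have h' : neg0 a = a := h
      have h0 : -(a 0) = a 0 := by
        have := congrFun h' 0
        rwa [neg0_apply0] at this
      have : a 0 = 0 := by omega
      rw [this]
      push_cast
      ring
    · intro a ha
      rw [hmem] at ha ⊢
      refine ⟨by rw [mx_neg0]; exact ha.1, ?_⟩
      intro h
      apply ha.2
      have h' : neg0 a = 0 := h
      rw [← neg0_neg0 a, h']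
      funext i; fin_cases i <;> rfl
    · intro a ha
      exact neg0_neg0 a
  have hnorm : ‖θ‖^2 = θ 0^2 + θ 1^2 := by
    rw [EuclideanSpace.norm_eq, Real.sq_sqrt (by positivity), Fin.sum_univ_two,
      Real.norm_eq_abs, Real.norm_eq_abs, sq_abs, sq_abs]
  have expand : ∀ x ∈ s, (∑ i, θ i * (x i : ℝ))^2 * F x
      = θ 0^2 * (((x 0 : ℝ))^2 * F x) + θ 1^2 * (((x 1 : ℝ))^2 * F x)
        + (2*θ 0*θ 1) * (((x 0 : ℝ)*(x 1 : ℝ)) * F x) := by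
    intro x _
    rw [Fin.sum_univ_two]; ring
  have hQQ : ∀ x ∈ s, ((x 0 : ℝ))^2 * F x + ((x 1 : ℝ))^2 * F x = Qinv x := by
    intro x hx
    have hxne : x ≠ 0 := ((hmem x).mp hx).2
    have hq : (0:ℝ) < (Q x : ℝ) := Qr_pos hxne
    have hsum : ((x 0 : ℝ))^2 + ((x 1 : ℝ))^2 = (Q x : ℝ) := by
      rw [Q]; push_cast; ring
    rw [hF, Qinv]
    field_simp
    nlinarith [hsum]
  calc ∑ x ∈ s, (∑ i, θ i * (x i : ℝ))^2 * F x
      = ∑ x ∈ s, (θ 0^2 * (((x 0 : ℝ))^2 * F x) + θ 1^2 * (((x 1 : ℝ))^2 * F x)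
        + (2*θ 0*θ 1) * (((x 0 : ℝ)*(x 1 : ℝ)) * F x)) := Finset.sum_congr rfl expand
  _ = θ 0^2 * ∑ x ∈ s, ((x 0 : ℝ))^2 * F x + θ 1^2 * ∑ x ∈ s, ((x 1 : ℝ))^2 * F x
        + (2*θ 0*θ 1) * ∑ x ∈ s, ((x 0 : ℝ)*(x 1 : ℝ)) * F x := by
      rw [Finset.sum_add_distrib, Finset.sum_add_distrib, Finset.mul_sum, Finset.mul_sum,
        Finset.mul_sum]
  _ = (θ 0^2 + θ 1^2) * ∑ x ∈ s, ((x 0 : ℝ))^2 * F x := by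
      rw [hC, ← hAB]; ring
  _ = ‖θ‖^2 / 2 * ∑ x ∈ s, Qinv x := by
      have h2 : ∑ x ∈ s, Qinv x
          = ∑ x ∈ s, ((x 0 : ℝ))^2 * F x + ∑ x ∈ s, ((x 1 : ℝ))^2 * F x := by
        rw [← Finset.sum_add_distrib]
        exact (Finset.sum_congr rfl hQQ).symm
      rw [h2, ← hAB, hnorm]; ring

noncomputable def hfun (θ : EuclideanSpace ℝ (Fin 2)) (x : Z2) : ℝ :=
  (1 - Real.cos (∑ i, θ i * (x i : ℝ))) * sfun2 2 x

lemma hfun_nonneg (θ : EuclideanSpace ℝ (Fin 2)) (x : Z2) : 0 ≤ hfun θ x :=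
  mul_nonneg (by linarith [Real.cos_le_one (∑ i, θ i * (x i : ℝ))]) (sfun_nonneg x)

lemma sfun_eq' {x : Z2} (hx : x ≠ 0) : sfun2 2 x = ((Q x : ℝ)^2)⁻¹ / sstar2 2 := by
  rw [sfun_eq]
  simp only [G, if_neg hx]

lemma sfun_zero : sfun2 2 0 = 0 := by
  rw [sfun_eq]
  simp [G]

lemma summable_cos (θ : EuclideanSpace ℝ (Fin 2)) :
    Summable (fun x : Z2 => Real.cos (∑ i, θ i * (x i : ℝ)) * sfun2 2 x) := by
  apply Summable.of_norm_bounded summable_sfun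
  intro x
  rw [norm_mul, Real.norm_eq_abs, Real.norm_eq_abs, abs_of_nonneg (sfun_nonneg x)]
  calc |Real.cos (∑ i, θ i * (x i : ℝ))| * sfun2 2 x ≤ 1 * sfun2 2 x :=
        mul_le_mul_of_nonneg_right (Real.abs_cos_le_one _) (sfun_nonneg x)
  _ = sfun2 2 x := one_mul _

lemma summable_hfun (θ : EuclideanSpace ℝ (Fin 2)) : Summable (hfun θ) := by
  have : hfun θ = fun x => sfun2 2 x - Real.cos (∑ i, θ i * (x i : ℝ)) * sfun2 2 x := by
    funext x; rw [hfun]; ring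
  rw [this]
  exact summable_sfun.sub (summable_cos θ)

lemma one_sub_phi (θ : EuclideanSpace ℝ (Fin 2)) :
    1 - phi2 2 θ = ∑' x, hfun θ x := by
  have hre : hfun θ = fun x => sfun2 2 x - Real.cos (∑ i, θ i * (x i : ℝ)) * sfun2 2 x := by
    funext x; rw [hfun]; ring
  rw [hre, Summable.tsum_sub summable_sfun (summable_cos θ), tsum_sfun, phi2]

lemma upper_bound (θ : EuclideanSpace ℝ (Fin 2)) (hθ0 : 0 < ‖θ‖) (hθ1 : ‖θ‖ ≤ 1) :
    1 - phi2 2 θ ≤ (sstar2 2)⁻¹ * ‖θ‖^2 * (4 * (1 + Real.log (2 * ‖θ‖⁻¹)) + 16) := by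
  set σ := sstar2 2 with hσdef
  have hσ : 0 < σ := sstar_pos
  set r := ‖θ‖ with hrdef
  set N : ℕ := ⌈r⁻¹⌉₊ with hNdef
  have hrinv1 : 1 ≤ r⁻¹ := (one_le_inv₀ hθ0).mpr hθ1
  have hN1 : 1 ≤ N := by
    have : (0:ℕ) < N := Nat.ceil_pos.mpr (by positivity)
    omega
  have hNge : r⁻¹ ≤ (N:ℝ) := Nat.le_ceil _
  have hNle : (N:ℝ) ≤ 2 * r⁻¹ := by
    have := Nat.ceil_lt_add_one (by positivity : (0:ℝ) ≤ r⁻¹)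
    push_cast at this ⊢
    linarith
  have hNpos : (0:ℝ) < (N:ℝ) := by exact_mod_cast hN1
  have hNinv : ((N:ℝ)^2)⁻¹ ≤ r^2 := by
    have h1 : (r⁻¹)^2 ≤ (N:ℝ)^2 := pow_le_pow_left₀ (by positivity) hNge 2
    calc ((N:ℝ)^2)⁻¹ ≤ ((r⁻¹)^2)⁻¹ := inv_anti₀ (by positivity) h1
    _ = r^2 := by rw [← inv_pow, inv_inv]
  have hlogN : Real.log N ≤ Real.log (2 * r⁻¹) := Real.log_le_log hNpos hNle
  rw [one_sub_phi]
  apply Summable.tsum_le_of_sum_le (summable_hfun θ)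
  intro u
  have hu0 : ∑ x ∈ u, hfun θ x = ∑ x ∈ u \ {0}, hfun θ x := by
    rw [eq_comm]
    apply Finset.sum_subset Finset.sdiff_subset
    intro x hx hx2
    have hx0 : x = 0 := by
      by_contra h
      exact hx2 (Finset.mem_sdiff.mpr ⟨hx, by simpa using h⟩)
    rw [hx0, hfun, sfun_zero, mul_zero]
  rw [hu0]
  set v := u \ {0} with hv
  rw [← Finset.sum_inter_add_sum_sdiff v (box N) (hfun θ)]
  have hb1 : ∑ x ∈ v ∩ box N, hfun θ x ≤ σ⁻¹ * (r^2/2) * (8 * (1 + Real.log N)) := by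
    have hple : ∀ x ∈ v ∩ box N, hfun θ x ≤ σ⁻¹ * (r^2/2) * Qinv x := by
      intro x hx
      have hxne : x ≠ 0 := by
        have := (Finset.mem_inter.mp hx).1
        rw [hv, Finset.mem_sdiff] at this
        simpa using this.2
      have hq : (0:ℝ) < (Q x : ℝ) := Qr_pos hxne
      have hcs := CS θ x
      have hcos := cos_ub (∑ i, θ i * (x i : ℝ))
      rw [hfun, sfun_eq' hxne]
      rw [← hrdef] at hcs
      have hmain : 1 - Real.cos (∑ i, θ i * (x i : ℝ)) ≤ r^2 * (Q x : ℝ) / 2 := by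
        linarith
      calc (1 - Real.cos (∑ i, θ i * (x i : ℝ))) * (((Q x : ℝ)^2)⁻¹ / σ)
          ≤ (r^2 * (Q x : ℝ) / 2) * (((Q x : ℝ)^2)⁻¹ / σ) :=
            mul_le_mul_of_nonneg_right hmain (by positivity)
      _ = σ⁻¹ * (r^2/2) * Qinv x := by
            rw [Qinv]
            field_simp
    calc ∑ x ∈ v ∩ box N, hfun θ x ≤ ∑ x ∈ v ∩ box N, σ⁻¹ * (r^2/2) * Qinv x :=
          Finset.sum_le_sum hple
    _ ≤ ∑ x ∈ box N \ {0}, σ⁻¹ * (r^2/2) * Qinv x := by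
        apply Finset.sum_le_sum_of_subset_of_nonneg
        · intro x hx
          rw [Finset.mem_inter, hv, Finset.mem_sdiff] at hx
          rw [Finset.mem_sdiff]
          exact ⟨hx.2, hx.1.2⟩
        · intro x _ _
          have := Qinv_nonneg x
          positivity
    _ = σ⁻¹ * (r^2/2) * ∑ x ∈ box N \ {0}, Qinv x := by rw [Finset.mul_sum]
    _ ≤ σ⁻¹ * (r^2/2) * (8 * (1 + Real.log N)) := by
        apply mul_le_mul_of_nonneg_left (sumQinv_ub hN1) (by positivity)
  have hb2 : ∑ x ∈ v \ box N, hfun θ x ≤ σ⁻¹ * 2 * (8 * ((N:ℝ)^2)⁻¹) := by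
    set M := u.sup mx with hM
    have hple : ∀ x : Z2, hfun θ x ≤ σ⁻¹ * 2 * G x := by
      intro x
      rw [hfun, sfun_eq, ← hσdef]
      calc (1 - Real.cos (∑ i, θ i * (x i : ℝ))) * (G x / σ) ≤ 2 * (G x / σ) :=
            mul_le_mul_of_nonneg_right (cos_ub2 _) (div_nonneg (G_nonneg x) hσ.le)
      _ = σ⁻¹ * 2 * G x := by ring
    calc ∑ x ∈ v \ box N, hfun θ x ≤ ∑ x ∈ v \ box N, σ⁻¹ * 2 * G x :=
          Finset.sum_le_sum (fun x _ => hple x)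
    _ ≤ ∑ x ∈ box M \ box N, σ⁻¹ * 2 * G x := by
        apply Finset.sum_le_sum_of_subset_of_nonneg
        · intro x hx
          rw [Finset.mem_sdiff] at hx ⊢
          refine ⟨?_, hx.2⟩
          rw [mem_box]
          apply Finset.le_sup
          have hx1 := hx.1
          rw [hv, Finset.mem_sdiff] at hx1
          exact hx1.1
        · intro x _ _
          have hg : (0:ℝ) ≤ G x := G_nonneg x
          positivity
    _ = σ⁻¹ * 2 * ∑ x ∈ box M \ box N, G x := by rw [Finset.mul_sum]
    _ ≤ σ⁻¹ * 2 * (8 * ((N:ℝ)^2)⁻¹) := by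
        apply mul_le_mul_of_nonneg_left (sum_G_boxdiff hN1 M) (by positivity)
  have hσinv : (0:ℝ) ≤ σ⁻¹ := by positivity
  have hfinal1 : σ⁻¹ * (r^2/2) * (8 * (1 + Real.log N)) = σ⁻¹ * r^2 * (4 * (1 + Real.log N)) := by
    ring
  have hfinal2 : σ⁻¹ * 2 * (8 * ((N:ℝ)^2)⁻¹) ≤ σ⁻¹ * r^2 * 16 := by
    calc σ⁻¹ * 2 * (8 * ((N:ℝ)^2)⁻¹) = σ⁻¹ * (16 * ((N:ℝ)^2)⁻¹) := by ring
    _ ≤ σ⁻¹ * (16 * r^2) := by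
        apply mul_le_mul_of_nonneg_left _ hσinv
        linarith
    _ = σ⁻¹ * r^2 * 16 := by ring
  have hfinal3 : σ⁻¹ * r^2 * (4 * (1 + Real.log N)) ≤ σ⁻¹ * r^2 * (4 * (1 + Real.log (2 * r⁻¹))) := by
    apply mul_le_mul_of_nonneg_left _ (by positivity)
    linarith
  calc ∑ x ∈ v ∩ box N, hfun θ x + ∑ x ∈ v \ box N, hfun θ x
      ≤ σ⁻¹ * r^2 * (4 * (1 + Real.log N)) + σ⁻¹ * r^2 * 16 := by
        rw [← hfinal1]; linarith
  _ ≤ σ⁻¹ * r^2 * (4 * (1 + Real.log (2 * r⁻¹))) + σ⁻¹ * r^2 * 16 := by linarith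
  _ = σ⁻¹ * r^2 * (4 * (1 + Real.log (2 * r⁻¹)) + 16) := by ring

lemma lower_bound (θ : EuclideanSpace ℝ (Fin 2)) (hθ0 : 0 < ‖θ‖) (hθ1 : ‖θ‖ < 1/8) :
    (sstar2 2)⁻¹ * ‖θ‖^2 / 2 * Real.log ((⌊(2*‖θ‖)⁻¹⌋₊ : ℝ) + 1) ≤ 1 - phi2 2 θ := by
  set σ := sstar2 2 with hσdef
  have hσ : 0 < σ := sstar_pos
  set r := ‖θ‖ with hrdef
  set N : ℕ := ⌊(2*r)⁻¹⌋₊ with hNdef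
  have hNle : (N:ℝ) ≤ (2*r)⁻¹ := Nat.floor_le (by positivity)
  rw [one_sub_phi]
  have h1 : ∑ x ∈ box N \ {0}, hfun θ x ≤ ∑' x, hfun θ x :=
    Summable.sum_le_tsum _ (fun x _ => hfun_nonneg θ x) (summable_hfun θ)
  refine le_trans ?_ h1
  have hple : ∀ x ∈ box N \ {0},
      σ⁻¹ / 4 * ((∑ i, θ i * (x i : ℝ))^2 * ((Q x : ℝ)^2)⁻¹) ≤ hfun θ x := by
    intro x hx
    rw [Finset.mem_sdiff, mem_box] at hx
    have hxne : x ≠ 0 := by simpa using hx.2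
    have hq : (0:ℝ) < (Q x : ℝ) := Qr_pos hxne
    set t := ∑ i, θ i * (x i : ℝ) with ht
    have hcs := CS θ x
    rw [← hrdef, ← ht] at hcs
    have hQm : (Q x : ℝ) ≤ 2 * ((mx x : ℝ))^2 := by
      have := Q_ub x; exact_mod_cast this
    have hmxN : ((mx x : ℝ)) ≤ (N:ℝ) := by exact_mod_cast hx.1
    have hmx0 : (0:ℝ) ≤ ((mx x : ℝ)) := by positivity
    have hN0 : (0:ℝ) ≤ (N:ℝ) := by positivity
    have hrN : 2 * r * (N:ℝ) ≤ 1 := by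
      rw [inv_eq_one_div] at hNle
      have := (le_div_iff₀ (by positivity : (0:ℝ) < 2*r)).mp hNle
      linarith
    have ht2 : t^2 ≤ 1/2 := by
      have hmm : ((mx x : ℝ))^2 ≤ ((N:ℝ))^2 := by nlinarith
      have hQN : (Q x : ℝ) ≤ 2 * ((N:ℝ))^2 := by linarith
      have h1 : t^2 ≤ r^2 * (2 * ((N:ℝ))^2) := by nlinarith [sq_nonneg r]
      have h2 : r^2 * (2*((N:ℝ))^2) ≤ 1/2 := by nlinarith [mul_nonneg (mul_nonneg (by norm_num : (0:ℝ) ≤ 2) hθ0.le) hN0]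
      linarith
    have htabs : |t| ≤ 1 := by
      rw [abs_le_one_iff_mul_self_le_one]
      nlinarith
    have hcos := cos_lb htabs
    rw [hfun, ← ht, sfun_eq' hxne]
    calc σ⁻¹ / 4 * (t^2 * ((Q x : ℝ)^2)⁻¹) = (t^2/4) * (((Q x : ℝ)^2)⁻¹ / σ) := by
          ring
    _ ≤ (1 - Real.cos t) * (((Q x : ℝ)^2)⁻¹ / σ) :=
          mul_le_mul_of_nonneg_right hcos (by positivity)
  calc σ⁻¹ * r^2 / 2 * Real.log ((N:ℝ) + 1)
      = σ⁻¹ / 4 * (r^2 / 2 * (4 * Real.log ((N:ℝ) + 1))) := by ring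
  _ ≤ σ⁻¹ / 4 * (r^2 / 2 * ∑ x ∈ box N \ {0}, Qinv x) := by
      apply mul_le_mul_of_nonneg_left _ (by positivity)
      apply mul_le_mul_of_nonneg_left _ (by positivity)
      have := sumQinv_lb N
      push_cast at this ⊢
      linarith
  _ = σ⁻¹ / 4 * ∑ x ∈ box N \ {0}, (∑ i, θ i * (x i : ℝ))^2 * ((Q x : ℝ)^2)⁻¹ := by
      rw [sym θ N]
  _ = ∑ x ∈ box N \ {0}, σ⁻¹ / 4 * ((∑ i, θ i * (x i : ℝ))^2 * ((Q x : ℝ)^2)⁻¹) := by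
      rw [Finset.mul_sum]
  _ ≤ ∑ x ∈ box N \ {0}, hfun θ x := Finset.sum_le_sum hple

end St14

open St14

/-- for `d = 2`, `α = 2`, there are `C > 1` and `δ > 0` such that for all
`θ ∈ ℝ²` with `0 < ‖θ‖ < δ`,
`C⁻¹ ‖θ‖² |log ‖θ‖| ≤ 1 − φ(θ) ≤ C ‖θ‖² |log ‖θ‖|`. -/
theorem statement14 :
    ∃ C : ℝ, 1 < C ∧ ∃ δ : ℝ, 0 < δ ∧
      ∀ θ : EuclideanSpace ℝ (Fin 2), 0 < ‖θ‖ → ‖θ‖ < δ →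
        C⁻¹ * ‖θ‖ ^ 2 * |Real.log ‖θ‖| ≤ 1 - phi2 2 θ ∧
        1 - phi2 2 θ ≤ C * ‖θ‖ ^ 2 * |Real.log ‖θ‖| := by
  have hσ : (0:ℝ) < sstar2 2 := sstar_pos
  set σ := sstar2 2 with hσdef
  have hσinvpos : (0:ℝ) < σ⁻¹ := by positivity
  refine ⟨4*σ + 16*σ⁻¹ + 1, by nlinarith, 1/8, by norm_num, ?_⟩
  intro θ h0 hδ
  set C := 4*σ + 16*σ⁻¹ + 1 with hC
  set r := ‖θ‖ with hrdef
  set L := |Real.log r| with hLdef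
  have hr1 : r < 1 := lt_trans hδ (by norm_num)
  have hlogneg : Real.log r < 0 := Real.log_neg h0 hr1
  have hLe : L = -Real.log r := abs_of_neg hlogneg
  have hlog2u : Real.log 2 < 0.6931471808 := Real.log_two_lt_d9
  have hlog2l : (0.6931471803:ℝ) < Real.log 2 := Real.log_two_gt_d9
  have hL2 : 2 < L := by
    have h8 : Real.log r < Real.log (1/8) := Real.log_lt_log h0 hδ
    have h18 : Real.log (1/8 : ℝ) = -(3 * Real.log 2) := by
      rw [one_div, Real.log_inv, show (8:ℝ) = 2^(3:ℕ) by norm_num, Real.log_pow]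
      push_cast
      ring
    rw [h18] at h8
    rw [hLe]
    linarith
  have hL0 : (0:ℝ) ≤ L := abs_nonneg _
  have hr2 : (0:ℝ) ≤ r^2 := sq_nonneg r
  constructor
  · -- lower bound
    have hlb := lower_bound θ h0 hδ
    rw [← hrdef, ← hσdef] at hlb
    set N : ℕ := ⌊(2*r)⁻¹⌋₊ with hN
    have hNv : (2*r)⁻¹ < (N:ℝ)+1 := Nat.lt_floor_add_one _
    have hNlog : L/2 ≤ Real.log ((N:ℝ)+1) := by
      have h1 : Real.log ((2*r)⁻¹) ≤ Real.log ((N:ℝ)+1) :=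
        Real.log_le_log (by positivity) hNv.le
      have h2 : Real.log ((2*r)⁻¹) = -(Real.log 2 + Real.log r) := by
        rw [Real.log_inv, Real.log_mul two_ne_zero h0.ne']
      rw [h2] at h1
      rw [hLe]
      linarith
    have hCinv : C⁻¹ ≤ σ⁻¹/4 := by
      have h4 : (0:ℝ) < 4*σ := by linarith
      have h5 : 4*σ ≤ C := by rw [hC]; nlinarith
      have h6 : C⁻¹ ≤ (4*σ)⁻¹ := inv_anti₀ h4 h5
      have h7 : (4*σ)⁻¹ = σ⁻¹/4 := by
        rw [mul_inv]
        ring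
      linarith
    calc C⁻¹ * r^2 * L ≤ (σ⁻¹/4) * r^2 * L := by
          apply mul_le_mul_of_nonneg_right _ hL0
          exact mul_le_mul_of_nonneg_right hCinv hr2
    _ = σ⁻¹ * r^2 / 2 * (L/2) := by ring
    _ ≤ σ⁻¹ * r^2 / 2 * Real.log ((N:ℝ)+1) := by
          apply mul_le_mul_of_nonneg_left hNlog (by positivity)
    _ ≤ 1 - phi2 2 θ := hlb
  · -- upper bound
    have hub := upper_bound θ h0 (by linarith : r ≤ 1)
    rw [← hrdef, ← hσdef] at hub
    have hlog2r : Real.log (2*r⁻¹) = Real.log 2 + L := by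
      rw [Real.log_mul two_ne_zero (by positivity), Real.log_inv, hLe]
    calc 1 - phi2 2 θ ≤ σ⁻¹ * r^2 * (4*(1+Real.log (2*r⁻¹)) + 16) := hub
    _ ≤ σ⁻¹ * r^2 * (16 * L) := by
        apply mul_le_mul_of_nonneg_left _ (by positivity)
        rw [hlog2r]
        linarith
    _ = (16*σ⁻¹) * r^2 * L := by ring
    _ ≤ C * r^2 * L := by
        apply mul_le_mul_of_nonneg_right _ hL0
        apply mul_le_mul_of_nonneg_right _ hr2
        rw [hC]
        nlinarith
end

section
/- Let d ≥ 1 and α > 0. There exists a finite constant C = C(d,α) such that for every λ > 0 and every finitely supported function f : ℤ^d \ {0} → ℝ, defining Q(f) = λ Σ_{x≠0} f(x)² + (1/4) Σ_{x,y∈ℤ^d, x≠0, y≠0} s(y−x) (f(y) − f(x))², and defining f_ext : ℤ^d → ℝ by f_ext(x) = f(x) for x ≠ 0 and f_ext(0) = Σ_{x≠0} s(x) f(x), and Q_ext(f_ext) = λ Σ_{x∈ℤ^d} f_ext(x)² + (1/4) Σ_{x,y∈ℤ^d} s(y−x) (f_ext(y) − f_ext(x))², one has Q(f) ≤ Q_ext(f_ext)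 ≤ C · Q(f). -/
/-- Euclidean norm of a point of `ℤ^d`. -/
noncomputable def znorm (d : ℕ) (z : Fin d → ℤ) : ℝ :=
  Real.sqrt (∑ i, ((z i : ℝ)) ^ 2)

/-- The normalizing constant `s* = Σ_{x≠0} ‖x‖^{-(d+α)}`. -/
noncomputable def sstar (d : ℕ) (α : ℝ) : ℝ :=
  ∑' x : Fin d → ℤ, if x = 0 then 0 else znorm d x ^ (-((d : ℝ) + α))

/-- The step distribution `s(x) = ‖x‖^{-(d+α)}/s*` on `ℤ^d`, `s(0) = 0`. -/
noncomputable def sfun (d : ℕ) (α : ℝ) (x : Fin d → ℤ) : ℝ :=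
  if x = 0 then 0 else znorm d x ^ (-((d : ℝ) + α)) / sstar d α

noncomputable def zemb (d : ℕ) (z : Fin d → ℤ) : EuclideanSpace ℝ (Fin d) :=
  WithLp.toLp 2 (fun i => (z i : ℝ))

lemma znorm_eq (d : ℕ) (z : Fin d → ℤ) : znorm d z = ‖zemb d z‖ := by
  rw [EuclideanSpace.norm_eq]
  simp [znorm, zemb, Real.norm_eq_abs, sq_abs]

lemma znorm_nonneg (d : ℕ) (z : Fin d → ℤ) : 0 ≤ znorm d z := Real.sqrt_nonneg _

lemma znorm_neg (d : ℕ) (z : Fin d → ℤ) : znorm d (-z) = znorm d z := by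
  unfold znorm
  congr 1
  apply Finset.sum_congr rfl
  intro i _
  have : ((-z) i : ℝ) = -((z i : ℝ)) := by push_cast; simp
  rw [this, neg_sq]

lemma abs_le_znorm (d : ℕ) (z : Fin d → ℤ) (i : Fin d) : |(z i : ℝ)| ≤ znorm d z := by
  rw [← Real.sqrt_sq_eq_abs]
  apply Real.sqrt_le_sqrt
  exact Finset.single_le_sum (f := fun j => ((z j : ℝ)) ^ 2) (fun j _ => sq_nonneg _)
    (Finset.mem_univ i)

lemma one_le_znorm (d : ℕ) {z : Fin d → ℤ} (hz : z ≠ 0) : 1 ≤ znorm d z := by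
  obtain ⟨i, hi⟩ := Function.ne_iff.mp hz
  refine le_trans ?_ (abs_le_znorm d z i)
  have h1 : (1 : ℤ) ≤ |z i| := Int.one_le_abs (by simpa using hi)
  calc (1:ℝ) ≤ (|z i| : ℝ) := by exact_mod_cast h1
    _ = |(z i : ℝ)| := by push_cast; ring

lemma znorm_pos (d : ℕ) {z : Fin d → ℤ} (hz : z ≠ 0) : 0 < znorm d z :=
  lt_of_lt_of_le one_pos (one_le_znorm d hz)

lemma znorm_sub_le (d : ℕ) (y x : Fin d → ℤ) : znorm d (y - x) ≤ znorm d y + znorm d x := by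
  rw [znorm_eq, znorm_eq, znorm_eq]
  have h : zemb d (y - x) = zemb d y - zemb d x := by
    ext i
    simp only [zemb, Pi.sub_apply]
    push_cast
    simp [zemb]
  rw [h]
  exact norm_sub_le _ _


lemma summable_base (d : ℕ) (hd : 1 ≤ d) (α : ℝ) (hα : 0 < α) :
    Summable (fun x : Fin d → ℤ => if x = 0 then (0:ℝ) else znorm d x ^ (-((d:ℝ)+α))) := by
  have hd0 : (0:ℝ) < d := by exact_mod_cast hd
  set q : ℝ := ((d:ℝ)+α)/d with hqdef
  have hq1 : 1 < q := by
    rw [hqdef, lt_div_iff₀ hd0]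
    linarith
  have hq0 : 0 < q := lt_trans one_pos hq1
  set w : ℤ → ℝ := fun n => if n = 0 then (1:ℝ) else |(n:ℝ)| ^ (-q) with hwdef
  have hw_nonneg : ∀ n, 0 ≤ w n := by
    intro n
    simp only [hwdef]
    split
    · norm_num
    · positivity
  have hw : Summable w := by
    have h1 := Real.summable_abs_int_rpow hq1
    have h2 : Summable (fun n : ℤ => if n = 0 then (1:ℝ) else 0) := by
      apply summable_of_finite_support
      apply Set.Finite.subset (Set.finite_singleton 0)
      intro n hn
      simp only [Function.mem_support] at hn
      simp only [Set.mem_singleton_iff]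
      by_contra h
      simp [h] at hn
    apply (h1.add h2).congr
    intro n
    by_cases h : n = 0
    · simp [hwdef, h, Real.zero_rpow (by linarith : -q ≠ 0)]
    · simp [hwdef, h]
  -- product summability by induction
  have hprod : ∀ n : ℕ, Summable (fun x : Fin n → ℤ => ∏ i, w (x i)) := by
    intro n
    induction n with
    | zero => exact Summable.of_finite
    | succ n ih =>
      rw [← (Fin.consEquiv (fun _ : Fin (n+1) => ℤ)).summable_iff]
      have h := hw.mul_of_nonneg ih hw_nonneg (fun x => Finset.prod_nonneg (fun i _ => hw_nonneg _))
      apply h.congr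
      intro p
      simp only [Function.comp_apply, Fin.consEquiv_apply]
      rw [Fin.prod_univ_succ]
      simp [Fin.cons_zero, Fin.cons_succ]
  apply Summable.of_nonneg_of_le _ _ (hprod d)
  · intro x
    split
    · exact le_refl 0
    · exact Real.rpow_nonneg (znorm_nonneg d x) _
  · intro x
    by_cases hx : x = 0
    · rw [if_pos hx]
      exact Finset.prod_nonneg (fun i _ => hw_nonneg _)
    · rw [if_neg hx]
      set u : Fin d → ℝ := fun i => if x i = 0 then (1:ℝ) else |(x i : ℝ)| with hudef
      have hu1 : ∀ i, 1 ≤ u i := by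
        intro i
        simp only [hudef]
        split
        · exact le_refl 1
        · rename_i h
          have : (1:ℤ) ≤ |x i| := Int.one_le_abs h
          calc (1:ℝ) ≤ (|x i| : ℝ) := by exact_mod_cast this
            _ = |(x i : ℝ)| := by push_cast; ring
      have hu_nonneg : ∀ i, 0 ≤ u i := fun i => le_trans zero_le_one (hu1 i)
      have hz1 : 1 ≤ znorm d x := one_le_znorm d hx
      have hu_le : ∀ i, u i ≤ znorm d x := by
        intro i
        simp only [hudef]
        split
        · exact hz1
        · exact abs_le_znorm d x i
      have hprod_le : ∏ i, u i ≤ znorm d x ^ d := by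
        calc ∏ i, u i ≤ ∏ _i : Fin d, znorm d x :=
              Finset.prod_le_prod (fun i _ => hu_nonneg i) (fun i _ => hu_le i)
          _ = znorm d x ^ d := by rw [Finset.prod_const, Finset.card_univ, Fintype.card_fin]
      have hw_eq : ∀ i, w (x i) = u i ^ (-q) := by
        intro i
        simp only [hwdef, hudef]
        split
        · rw [Real.one_rpow]
        · rfl
      have hprod_pos : 0 < ∏ i, u i := Finset.prod_pos (fun i _ => lt_of_lt_of_le one_pos (hu1 i))
      have hexp : (d:ℝ) * (-q) = -((d:ℝ)+α) := by
        rw [hqdef]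
        field_simp
      calc znorm d x ^ (-((d:ℝ)+α)) = (znorm d x ^ (d:ℝ)) ^ (-q) := by
            rw [← Real.rpow_mul (znorm_nonneg d x), hexp]
        _ ≤ (∏ i, u i) ^ (-q) := by
            apply Real.rpow_le_rpow_of_nonpos hprod_pos _ (by linarith)
            rw [Real.rpow_natCast (znorm d x) d]
            exact hprod_le
        _ = ∏ i, u i ^ (-q) := by
            rw [Real.finset_prod_rpow _ _ (fun i _ => hu_nonneg i)]
        _ = ∏ i, w (x i) := by
            exact Finset.prod_congr rfl (fun i _ => (hw_eq i).symm)


lemma one_le_sstar {d : ℕ} (hd : 1 ≤ d) {α : ℝ} (hα : 0 < α) : 1 ≤ sstar d α := by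
  have hd' : 0 < d := hd
  set x0 : Fin d → ℤ := fun j => if j = (⟨0, hd'⟩ : Fin d) then 1 else 0 with hx0
  have hx0ne : x0 ≠ 0 := by
    intro h
    have := congrFun h ⟨0, hd'⟩
    simp [hx0] at this
  have hzx0 : znorm d x0 = 1 := by
    unfold znorm
    have h : ∑ i, ((x0 i : ℝ)) ^ 2 = 1 := by
      rw [hx0]
      rw [Finset.sum_eq_single (⟨0, hd'⟩ : Fin d)]
      · simp
      · intro j _ hj; simp [hj]
      · intro h; simp at h
    rw [h, Real.sqrt_one]
  have hle := Summable.le_tsum (summable_base d hd α hα) x0 (fun b _ => by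
    by_cases hb : b = 0
    · simp [hb]
    · rw [if_neg hb]; exact Real.rpow_nonneg (znorm_nonneg d b) _)
  rw [if_neg hx0ne, hzx0, Real.one_rpow] at hle
  exact hle

lemma sstar_pos {d : ℕ} (hd : 1 ≤ d) {α : ℝ} (hα : 0 < α) : 0 < sstar d α :=
  lt_of_lt_of_le one_pos (one_le_sstar hd hα)

lemma sfun_nonneg {d : ℕ} (hd : 1 ≤ d) {α : ℝ} (hα : 0 < α) (x : Fin d → ℤ) :
    0 ≤ sfun d α x := by
  unfold sfun
  split
  · exact le_refl 0
  · exact div_nonneg (Real.rpow_nonneg (znorm_nonneg d x) _) (sstar_pos hd hα).le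

lemma sfun_zero (d : ℕ) (α : ℝ) : sfun d α 0 = 0 := if_pos rfl

lemma sfun_le_one {d : ℕ} (hd : 1 ≤ d) {α : ℝ} (hα : 0 < α) (x : Fin d → ℤ) :
    sfun d α x ≤ 1 := by
  unfold sfun
  split
  · exact zero_le_one
  · rename_i hx
    rw [div_le_one (sstar_pos hd hα)]
    refine le_trans ?_ (one_le_sstar hd hα)
    apply Real.rpow_le_one_of_one_le_of_nonpos (one_le_znorm d hx)
    have : (0:ℝ) ≤ (d:ℝ) := Nat.cast_nonneg d
    linarith

lemma sfun_neg_arg (d : ℕ) (α : ℝ) (x : Fin d → ℤ) : sfun d α (-x) = sfun d α x := by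
  unfold sfun
  by_cases hx : x = 0
  · simp [hx]
  · rw [if_neg hx, if_neg (by simpa using hx), znorm_neg]

lemma sfun_summable {d : ℕ} (hd : 1 ≤ d) {α : ℝ} (hα : 0 < α) : Summable (sfun d α) := by
  apply ((summable_base d hd α hα).div_const (sstar d α)).congr
  intro x
  unfold sfun
  split
  · simp
  · rfl

lemma sfun_tsum_eq_one {d : ℕ} (hd : 1 ≤ d) {α : ℝ} (hα : 0 < α) :
    ∑' x, sfun d α x = 1 := by
  have h : (fun x => sfun d α x) = fun x =>
      (if x = 0 then (0:ℝ) else znorm d x ^ (-((d:ℝ)+α))) / sstar d α := by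
    funext x
    unfold sfun
    split <;> simp
  rw [h, tsum_div_const]
  exact div_self (ne_of_gt (sstar_pos hd hα))

lemma sfun_mul_le {d : ℕ} (hd : 1 ≤ d) {α : ℝ} (hα : 0 < α) {x y : Fin d → ℤ}
    (hx : x ≠ 0) (hy : y ≠ 0) (hxy : x ≠ y) :
    sfun d α x * sfun d α y ≤ (2 ^ ((d:ℝ)+α) / sstar d α) * sfun d α (y - x) := by
  have hyx : y - x ≠ 0 := sub_ne_zero.mpr (Ne.symm hxy)
  have hp0 : 0 < (d:ℝ) + α := by
    have : (0:ℝ) ≤ (d:ℝ) := Nat.cast_nonneg d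
    linarith
  unfold sfun
  rw [if_neg hx, if_neg hy, if_neg hyx]
  have ha : 1 ≤ znorm d x := one_le_znorm d hx
  have hb : 1 ≤ znorm d y := one_le_znorm d hy
  have hc : 0 < znorm d (y - x) := znorm_pos d hyx
  have hs := sstar_pos hd hα
  set p : ℝ := (d:ℝ) + α
  set a := znorm d x
  set b := znorm d y
  set c := znorm d (y - x)
  have h1 : c ≤ 2 * (a * b) := by
    have := znorm_sub_le d y x
    nlinarith
  have h2 : a ^ (-p) * b ^ (-p) ≤ 2 ^ p * c ^ (-p) := by
    have hab : (0:ℝ) < a * b := by nlinarith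
    have h3 : (2 * (a * b)) ^ (-p) ≤ c ^ (-p) :=
      Real.rpow_le_rpow_of_nonpos hc h1 (by linarith)
    have h4 : (2 * (a * b)) ^ (-p) = 2 ^ (-p) * (a ^ (-p) * b ^ (-p)) := by
      rw [Real.mul_rpow (by norm_num) hab.le,
        Real.mul_rpow (by linarith : (0:ℝ) ≤ a) (by linarith : (0:ℝ) ≤ b)]
    have h5 : (2:ℝ) ^ p * 2 ^ (-p) = 1 := by
      rw [← Real.rpow_add (by norm_num)]
      simp
    calc a ^ (-p) * b ^ (-p) = 2 ^ p * ((2 * (a * b)) ^ (-p)) := by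
          rw [h4, ← mul_assoc, h5, one_mul]
      _ ≤ 2 ^ p * c ^ (-p) :=
          mul_le_mul_of_nonneg_left h3 (Real.rpow_nonneg (by norm_num) p)
  have hss : 0 < sstar d α * sstar d α := mul_pos hs hs
  calc a ^ (-p) / sstar d α * (b ^ (-p) / sstar d α)
      = (a ^ (-p) * b ^ (-p)) / (sstar d α * sstar d α) := by ring
    _ ≤ (2 ^ p * c ^ (-p)) / (sstar d α * sstar d α) := by
        gcongr
    _ = 2 ^ p / sstar d α * (c ^ (-p) / sstar d α) := by ring

lemma tsum_jensen_sq {ι : Type*} (w v : ι → ℝ) (hw : ∀ i, 0 ≤ w i) (hws : Summable w)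
    (hw1 : ∑' i, w i = 1) (hv2 : Summable (fun i => w i * v i ^ 2)) :
    (∑' i, w i * v i) ^ 2 ≤ ∑' i, w i * v i ^ 2 := by
  have hv1 : Summable (fun i => w i * v i) := by
    apply Summable.of_abs
    apply Summable.of_nonneg_of_le (fun i => abs_nonneg _)
      (fun i => ?_) ((hws.add hv2).div_const 2)
    have h1 : |w i * v i| = w i * |v i| := by
      rw [abs_mul, abs_of_nonneg (hw i)]
    rw [h1]
    have h2 : |v i| ≤ (1 + v i ^ 2) / 2 := by nlinarith [sq_abs (v i), sq_nonneg (|v i| - 1)]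
    calc w i * |v i| ≤ w i * ((1 + v i ^ 2)/2) := mul_le_mul_of_nonneg_left h2 (hw i)
      _ = (w i + w i * v i ^ 2) / 2 := by ring
  set m := ∑' i, w i * v i with hm
  have key : 0 ≤ ∑' i, (w i * v i ^ 2 - 2 * m * (w i * v i) + m ^ 2 * w i) := by
    apply tsum_nonneg
    intro i
    have h : w i * v i ^ 2 - 2 * m * (w i * v i) + m ^ 2 * w i = w i * (v i - m) ^ 2 := by ring
    rw [h]
    exact mul_nonneg (hw i) (sq_nonneg _)
  rw [Summable.tsum_add (hv2.sub (hv1.mul_left _)) (hws.mul_left _),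
      Summable.tsum_sub hv2 (hv1.mul_left _), tsum_mul_left, tsum_mul_left, hw1, ← hm] at key
  nlinarith [key]

set_option maxHeartbeats 2000000 in
theorem statement18_aux (d : ℕ) (hd : 1 ≤ d) (α : ℝ) (hα : 0 < α) :
    ∃ C : ℝ, ∀ lam : ℝ, 0 < lam →
      ∀ f : (Fin d → ℤ) → ℝ, (Function.support f).Finite →
      ∀ g : (Fin d → ℤ) → ℝ,
        (∀ x : Fin d → ℤ, x ≠ 0 → g x = f x) →
        (g 0 = ∑' x : Fin d → ℤ, sfun d α x * f x) →
        (lam * (∑' x : Fin d → ℤ, (if x ≠ 0 then f x ^ 2 else 0))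
            + (1 / 4) * ∑' x : Fin d → ℤ, ∑' y : Fin d → ℤ,
                (if x ≠ 0 ∧ y ≠ 0 then sfun d α (y - x) * (f y - f x) ^ 2 else 0))
          ≤ (lam * (∑' x : Fin d → ℤ, g x ^ 2)
            + (1 / 4) * ∑' x : Fin d → ℤ, ∑' y : Fin d → ℤ,
                sfun d α (y - x) * (g y - g x) ^ 2) ∧
        (lam * (∑' x : Fin d → ℤ, g x ^ 2)
            + (1 / 4) * ∑' x : Fin d → ℤ, ∑' y : Fin d → ℤ,
                sfun d α (y - x) * (g y - g x) ^ 2)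
          ≤ C * (lam * (∑' x : Fin d → ℤ, (if x ≠ 0 then f x ^ 2 else 0))
            + (1 / 4) * ∑' x : Fin d → ℤ, ∑' y : Fin d → ℤ,
                (if x ≠ 0 ∧ y ≠ 0 then sfun d α (y - x) * (f y - f x) ^ 2 else 0)) := by
  classical
  set K : ℝ := 2 ^ ((d:ℝ)+α) / sstar d α with hK
  have hK0 : 0 ≤ K := div_nonneg (Real.rpow_nonneg (by norm_num) _) (sstar_pos hd hα).le
  refine ⟨2 + 2 * K, ?_⟩
  intro lam hlam f hf g hg hg0
  set s : (Fin d → ℤ) → ℝ := sfun d α with hs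
  have hsnn : ∀ x, 0 ≤ s x := sfun_nonneg hd hα
  have hs1 : ∀ x, s x ≤ 1 := sfun_le_one hd hα
  have hssum : Summable s := sfun_summable hd hα
  have hstot : ∑' x, s x = 1 := sfun_tsum_eq_one hd hα
  have hs0 : s 0 = 0 := sfun_zero d α
  have hsneg : ∀ x, s (-x) = s x := sfun_neg_arg d α
  -- support facts
  set S : Set (Fin d → ℤ) := Function.support f ∪ {0} with hSdef
  have hSfin : S.Finite := hf.union (Set.finite_singleton 0)
  have hsum_of : ∀ h : (Fin d → ℤ) → ℝ, (∀ x, x ∉ S → h x = 0) → Summable h := by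
    intro h h0
    apply summable_of_finite_support
    apply hSfin.subset
    intro x hx
    by_contra hc
    exact (Function.mem_support.mp hx) (h0 x hc)
  have hgS : ∀ x, x ∉ S → g x = 0 := by
    intro x hx
    have hx0 : x ≠ 0 := by
      intro h; exact hx (Or.inr (by simp [h]))
    have hxf : f x = 0 := by
      by_contra h; exact hx (Or.inl h)
    rw [hg x hx0, hxf]
  have hg2 : Summable (fun x => g x ^ 2) :=
    hsum_of _ (fun x hx => by rw [hgS x hx]; ring)
  have hsg2 : Summable (fun x => s x * g x ^ 2) :=
    hsum_of _ (fun x hx => by rw [hgS x hx]; ring)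
  have hT1sum : Summable (fun x => if x ≠ 0 then f x ^ 2 else 0) := by
    apply hsum_of
    intro x hx
    have hxf : f x = 0 := by by_contra h; exact hx (Or.inl h)
    split <;> simp [hxf]
  have hsf2 : Summable (fun x => s x * f x ^ 2) := by
    apply hsum_of
    intro x hx
    have hxf : f x = 0 := by by_contra h; exact hx (Or.inl h)
    rw [hxf]; ring
  have hsf : Summable (fun x => s x * f x) := by
    apply hsum_of
    intro x hx
    have hxf : f x = 0 := by by_contra h; exact hx (Or.inl h)
    rw [hxf]; ring
  have hsg : Summable (fun x => s x * g x) :=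
    hsum_of _ (fun x hx => by rw [hgS x hx]; ring)
  have hg0f : ∑' x, s x * g x = g 0 := by
    rw [hg0]
    apply tsum_congr
    intro x
    by_cases hx : x = 0
    · rw [hx, hs0]; ring
    · rw [hg x hx]
  -- product summability
  have hFnn : ∀ z : (Fin d → ℤ) × (Fin d → ℤ), 0 ≤ s (z.2 - z.1) * (g z.2 - g z.1) ^ 2 :=
    fun z => mul_nonneg (hsnn _) (sq_nonneg _)
  have HF : Summable (fun z : (Fin d → ℤ) × (Fin d → ℤ) => s (z.2 - z.1) * (g z.2 - g z.1) ^ 2) := by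
    have A1 : Summable (fun z : (Fin d → ℤ) × (Fin d → ℤ) => s (z.2 - z.1) * (2 * g z.1 ^ 2)) := by
      rw [← (Equiv.prodShear (Equiv.refl (Fin d → ℤ)) (fun x => Equiv.addRight x)).summable_iff]
      have base : Summable (fun p : (Fin d → ℤ) × (Fin d → ℤ) => (2 * g p.1 ^ 2) * s p.2) :=
        (hg2.mul_left 2).mul_of_nonneg hssum
          (fun x => by positivity) (fun x => hsnn x)
      apply base.congr
      intro p
      simp only [Function.comp_apply, Equiv.prodShear_apply, Equiv.refl_apply,
        Equiv.coe_addRight, add_sub_cancel_right]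
      ring
    have A2 : Summable (fun z : (Fin d → ℤ) × (Fin d → ℤ) => s (z.2 - z.1) * (2 * g z.2 ^ 2)) := by
      rw [← ((Equiv.prodShear (Equiv.refl (Fin d → ℤ)) (fun y => Equiv.subLeft y)).trans
        (Equiv.prodComm _ _)).summable_iff]
      have base : Summable (fun p : (Fin d → ℤ) × (Fin d → ℤ) => (2 * g p.1 ^ 2) * s p.2) :=
        (hg2.mul_left 2).mul_of_nonneg hssum
          (fun x => by positivity) (fun x => hsnn x)
      apply base.congr
      intro p
      simp only [Function.comp_apply, Equiv.trans_apply, Equiv.prodShear_apply, Equiv.refl_apply,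
        Equiv.subLeft_apply, Equiv.prodComm_apply, Prod.swap_prod_mk, sub_sub_cancel]
      ring
    apply Summable.of_nonneg_of_le hFnn _ (A1.add A2)
    intro z
    have h : (g z.2 - g z.1) ^ 2 ≤ 2 * g z.1 ^ 2 + 2 * g z.2 ^ 2 := by nlinarith [sq_nonneg (g z.1 + g z.2)]
    calc s (z.2 - z.1) * (g z.2 - g z.1) ^ 2
        ≤ s (z.2 - z.1) * (2 * g z.1 ^ 2 + 2 * g z.2 ^ 2) := mul_le_mul_of_nonneg_left h (hsnn _)
      _ = s (z.2 - z.1) * (2 * g z.1 ^ 2) + s (z.2 - z.1) * (2 * g z.2 ^ 2) := by ring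
  have HFfacts := (summable_prod_of_nonneg hFnn).mp HF
  have hΦinner : ∀ x, Summable (fun y => s (y - x) * (g y - g x) ^ 2) := fun x => HFfacts.1 x
  have hΦouter : Summable (fun x => ∑' y, s (y - x) * (g y - g x) ^ 2) := HFfacts.2
  -- Ψ facts
  have hΨle : ∀ x y, (if x ≠ 0 ∧ y ≠ 0 then s (y - x) * (f y - f x) ^ 2 else 0)
      ≤ s (y - x) * (g y - g x) ^ 2 := by
    intro x y
    split
    · rename_i hxy
      rw [hg y hxy.2, hg x hxy.1]
    · exact hFnn (x, y)
  have hΨnn : ∀ x y, 0 ≤ (if x ≠ 0 ∧ y ≠ 0 then s (y - x) * (f y - f x) ^ 2 else 0) := by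
    intro x y
    split
    · exact mul_nonneg (hsnn _) (sq_nonneg _)
    · exact le_refl 0
  have hΨinner : ∀ x, Summable (fun y => if x ≠ 0 ∧ y ≠ 0 then s (y - x) * (f y - f x) ^ 2 else 0) :=
    fun x => Summable.of_nonneg_of_le (hΨnn x) (hΨle x) (hΦinner x)
  have hΨsum_le : ∀ x, (∑' y, if x ≠ 0 ∧ y ≠ 0 then s (y - x) * (f y - f x) ^ 2 else 0)
      ≤ ∑' y, s (y - x) * (g y - g x) ^ 2 :=
    fun x => Summable.tsum_le_tsum (hΨle x) (hΨinner x) (hΦinner x)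
  have hΨouter : Summable (fun x => ∑' y, if x ≠ 0 ∧ y ≠ 0 then s (y - x) * (f y - f x) ^ 2 else 0) :=
    Summable.of_nonneg_of_le (fun x => tsum_nonneg (hΨnn x)) hΨsum_le hΦouter
  -- common abbreviations (values)
  set T1 : ℝ := ∑' x, (if x ≠ 0 then f x ^ 2 else 0) with hT1
  set DΨ : ℝ := ∑' x, ∑' y, (if x ≠ 0 ∧ y ≠ 0 then s (y - x) * (f y - f x) ^ 2 else 0) with hDΨ
  set DΦ : ℝ := ∑' x, ∑' y, s (y - x) * (g y - g x) ^ 2 with hDΦ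
  set G2 : ℝ := ∑' x, g x ^ 2 with hG2def
  have hT1nn : 0 ≤ T1 := tsum_nonneg (fun x => by split <;> [exact sq_nonneg _; exact le_refl 0])
  have hDΨnn : 0 ≤ DΨ := tsum_nonneg (fun x => tsum_nonneg (hΨnn x))
  constructor
  · -- lower bound
    have lowA : T1 ≤ G2 := by
      apply Summable.tsum_le_tsum _ hT1sum hg2
      intro x
      by_cases hx : x = 0
      · simp only [hx, ne_eq, not_true_eq_false, if_false]
        exact sq_nonneg _
      · rw [if_pos hx, hg x hx]
    have lowB : DΨ ≤ DΦ := Summable.tsum_le_tsum hΨsum_le hΨouter hΦouter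
    nlinarith [mul_le_mul_of_nonneg_left lowA hlam.le]
  · -- upper bound
    have hg0sq : g 0 ^ 2 ≤ T1 := by
      have hj := tsum_jensen_sq s f hsnn hssum hstot hsf2
      rw [hg0]
      refine le_trans hj (Summable.tsum_le_tsum ?_ hsf2 hT1sum)
      intro x
      by_cases hx : x = 0
      · rw [hx, hs0]
        simp
      · rw [if_pos hx]
        exact mul_le_of_le_one_left (sq_nonneg _) (hs1 x)
    have hsingle : Summable (fun x : Fin d → ℤ => if x = 0 then g 0 ^ 2 else 0) := by
      apply hsum_of
      intro x hx
      have hx0 : x ≠ 0 := by intro h; exact hx (Or.inr (by simp [h]))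
      rw [if_neg hx0]
    have hG2le : G2 ≤ 2 * T1 := by
      have hsplit : G2 = T1 + g 0 ^ 2 := by
        rw [hG2def, hT1]
        have pt : ∀ x, g x ^ 2 = (if x ≠ 0 then f x ^ 2 else 0) + (if x = 0 then g 0 ^ 2 else 0) := by
          intro x
          by_cases hx : x = 0
          · simp [hx]
          · simp only [if_pos hx, if_neg hx, add_zero, hg x hx]
        rw [tsum_congr pt, Summable.tsum_add hT1sum hsingle, tsum_ite_eq 0 (fun _ => g 0 ^ 2)]
      linarith
    -- V facts
    set V : ℝ := ∑' x, s x * (g x - g 0) ^ 2 with hV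
    have hVnn' : ∀ x, 0 ≤ s x * (g x - g 0) ^ 2 := fun x => mul_nonneg (hsnn x) (sq_nonneg _)
    have hVsum : Summable (fun x => s x * (g x - g 0) ^ 2) := by
      apply Summable.of_nonneg_of_le hVnn' _ ((hsg2.mul_left 2).add (hssum.mul_left (2 * g 0 ^ 2)))
      intro x
      have h : (g x - g 0) ^ 2 ≤ 2 * g x ^ 2 + 2 * g 0 ^ 2 := by nlinarith [sq_nonneg (g x + g 0)]
      calc s x * (g x - g 0) ^ 2 ≤ s x * (2 * g x ^ 2 + 2 * g 0 ^ 2) :=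
            mul_le_mul_of_nonneg_left h (hsnn x)
        _ = 2 * (s x * g x ^ 2) + 2 * g 0 ^ 2 * s x := by ring
    have hIx : ∀ x, Summable (fun y => s y * (g x - g y) ^ 2) := by
      intro x
      apply Summable.of_nonneg_of_le (fun y => mul_nonneg (hsnn y) (sq_nonneg _)) _
        ((hssum.mul_left (2 * g x ^ 2)).add (hsg2.mul_left 2))
      intro y
      have h : (g x - g y) ^ 2 ≤ 2 * g x ^ 2 + 2 * g y ^ 2 := by nlinarith [sq_nonneg (g x + g y)]
      calc s y * (g x - g y) ^ 2 ≤ s y * (2 * g x ^ 2 + 2 * g y ^ 2) :=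
            mul_le_mul_of_nonneg_left h (hsnn y)
        _ = 2 * g x ^ 2 * s y + 2 * (s y * g y ^ 2) := by ring
    have jensen2 : ∀ x, (g x - g 0) ^ 2 ≤ ∑' y, s y * (g x - g y) ^ 2 := by
      intro x
      have hgx_sub : g x - g 0 = ∑' y, s y * (g x - g y) := by
        have h1 : ∀ y, s y * (g x - g y) = s y * g x - s y * g y := fun y => by ring
        rw [tsum_congr h1, Summable.tsum_sub (hssum.mul_right (g x)) hsg, tsum_mul_right, hstot, hg0f, one_mul]
      rw [hgx_sub]
      exact tsum_jensen_sq s (fun y => g x - g y) hsnn hssum hstot (hIx x)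
    have hIxle : ∀ x, (∑' y, s y * (g x - g y) ^ 2) ≤ 2 * g x ^ 2 + 2 * (∑' y, s y * g y ^ 2) := by
      intro x
      have step : (∑' y, s y * (g x - g y) ^ 2) ≤ ∑' y, (2 * g x ^ 2 * s y + 2 * (s y * g y ^ 2)) := by
        apply Summable.tsum_le_tsum _ (hIx x) ((hssum.mul_left (2 * g x ^ 2)).add (hsg2.mul_left 2))
        intro y
        have h : (g x - g y) ^ 2 ≤ 2 * g x ^ 2 + 2 * g y ^ 2 := by nlinarith [sq_nonneg (g x + g y)]
        calc s y * (g x - g y) ^ 2 ≤ s y * (2 * g x ^ 2 + 2 * g y ^ 2) :=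
              mul_le_mul_of_nonneg_left h (hsnn y)
          _ = 2 * g x ^ 2 * s y + 2 * (s y * g y ^ 2) := by ring
      rw [Summable.tsum_add (hssum.mul_left (2 * g x ^ 2)) (hsg2.mul_left 2), tsum_mul_left, tsum_mul_left,
        hstot, mul_one] at step
      exact step
    have hRHSsum : Summable (fun x => s x * (∑' y, s y * (g x - g y) ^ 2)) := by
      apply Summable.of_nonneg_of_le
        (fun x => mul_nonneg (hsnn x) (tsum_nonneg (fun y => mul_nonneg (hsnn y) (sq_nonneg _))))
        _ (((hsg2.mul_left 2).add (hssum.mul_left (2 * (∑' y, s y * g y ^ 2)))))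
      intro x
      calc s x * (∑' y, s y * (g x - g y) ^ 2)
          ≤ s x * (2 * g x ^ 2 + 2 * (∑' y, s y * g y ^ 2)) :=
            mul_le_mul_of_nonneg_left (hIxle x) (hsnn x)
        _ ≤ 2 * (s x * g x ^ 2) + 2 * (∑' y, s y * g y ^ 2) * s x := by ring_nf; exact le_refl _
    have hVle1 : V ≤ ∑' x, s x * (∑' y, s y * (g x - g y) ^ 2) := by
      apply Summable.tsum_le_tsum _ hVsum hRHSsum
      intro x
      exact mul_le_mul_of_nonneg_left (jensen2 x) (hsnn x)
    have hVle2 : (∑' x, s x * (∑' y, s y * (g x - g y) ^ 2)) ≤ K * DΨ := by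
      have pt : ∀ x, s x * (∑' y, s y * (g x - g y) ^ 2)
          ≤ K * ∑' y, (if x ≠ 0 ∧ y ≠ 0 then s (y - x) * (f y - f x) ^ 2 else 0) := by
        intro x
        rw [← tsum_mul_left, ← tsum_mul_left]
        apply Summable.tsum_le_tsum _ ((hIx x).mul_left (s x)) ((hΨinner x).mul_left K)
        intro y
        by_cases hx : x = 0
        · rw [hx, hs0, zero_mul]
          exact mul_nonneg hK0 (hΨnn x y |>.trans_eq (by rw [hx]))
        by_cases hy : y = 0
        · rw [hy, hs0, zero_mul, mul_zero]
          exact mul_nonneg hK0 (hΨnn x y |>.trans_eq (by rw [hy]))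
        rw [if_pos ⟨hx, hy⟩]
        by_cases hxy : x = y
        · subst hxy
          simp [sub_self, hs0]
        · have hsq : (g x - g y) ^ 2 = (f y - f x) ^ 2 := by
            rw [hg x hx, hg y hy, ← neg_sub (f y) (f x), neg_sq]
          calc s x * (s y * (g x - g y) ^ 2) = (s x * s y) * (f y - f x) ^ 2 := by
                rw [← hsq]; ring
            _ ≤ (K * s (y - x)) * (f y - f x) ^ 2 :=
                mul_le_mul_of_nonneg_right (sfun_mul_le hd hα hx hy hxy) (sq_nonneg _)
            _ = K * (s (y - x) * (f y - f x) ^ 2) := by ring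
      calc (∑' x, s x * (∑' y, s y * (g x - g y) ^ 2))
          ≤ ∑' x, K * ∑' y, (if x ≠ 0 ∧ y ≠ 0 then s (y - x) * (f y - f x) ^ 2 else 0) :=
            Summable.tsum_le_tsum pt hRHSsum (hΨouter.mul_left K)
        _ = K * DΨ := by rw [tsum_mul_left, hDΨ]
    have hVleK : V ≤ K * DΨ := le_trans hVle1 hVle2
    -- splitting DΦ
    have hRnn : ∀ x y, 0 ≤ (if x = 0 ∨ y = 0 then s (y - x) * (g y - g x) ^ 2 else 0) := by
      intro x y; split
      · exact mul_nonneg (hsnn _) (sq_nonneg _)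
      · exact le_refl 0
    have hRle : ∀ x y, (if x = 0 ∨ y = 0 then s (y - x) * (g y - g x) ^ 2 else 0)
        ≤ s (y - x) * (g y - g x) ^ 2 := by
      intro x y; split
      · exact le_refl _
      · exact mul_nonneg (hsnn _) (sq_nonneg _)
    have hRinner : ∀ x, Summable (fun y => if x = 0 ∨ y = 0 then s (y - x) * (g y - g x) ^ 2 else 0) :=
      fun x => Summable.of_nonneg_of_le (hRnn x) (hRle x) (hΦinner x)
    have hRouter : Summable (fun x => ∑' y, if x = 0 ∨ y = 0 then s (y - x) * (g y - g x) ^ 2 else 0) :=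
      Summable.of_nonneg_of_le (fun x => tsum_nonneg (hRnn x))
        (fun x => Summable.tsum_le_tsum (hRle x) (hRinner x) (hΦinner x)) hΦouter
    have hsplitD : DΦ = DΨ + ∑' x, ∑' y, (if x = 0 ∨ y = 0 then s (y - x) * (g y - g x) ^ 2 else 0) := by
      have ptsplit : ∀ x y, s (y - x) * (g y - g x) ^ 2
          = (if x ≠ 0 ∧ y ≠ 0 then s (y - x) * (f y - f x) ^ 2 else 0)
            + (if x = 0 ∨ y = 0 then s (y - x) * (g y - g x) ^ 2 else 0) := by
        intro x y
        by_cases hx : x = 0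
        · simp only [hx, ne_eq, not_true_eq_false, false_and, if_false, true_or, if_pos, zero_add]
        by_cases hy : y = 0
        · simp only [hy, ne_eq, not_true_eq_false, and_false, if_false, or_true, if_pos, zero_add]
        · rw [if_pos ⟨hx, hy⟩, if_neg (by tauto), add_zero, hg y hy, hg x hx]
      have inner : ∀ x, (∑' y, s (y - x) * (g y - g x) ^ 2)
          = (∑' y, if x ≠ 0 ∧ y ≠ 0 then s (y - x) * (f y - f x) ^ 2 else 0)
            + ∑' y, (if x = 0 ∨ y = 0 then s (y - x) * (g y - g x) ^ 2 else 0) := by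
        intro x
        rw [tsum_congr (ptsplit x), Summable.tsum_add (hΨinner x) (hRinner x)]
      rw [hDΦ, tsum_congr inner, Summable.tsum_add hΨouter hRouter, ← hDΨ]
    -- E ≤ 2V
    have hW : (∑' y, s (y - 0) * (g y - g 0) ^ 2) = V := by
      rw [hV]
      apply tsum_congr
      intro y
      rw [sub_zero]
    have hVsum' : Summable (fun y => s (y - 0) * (g y - g 0) ^ 2) := by
      apply hVsum.congr
      intro y
      rw [sub_zero]
    have hinner2eq : ∀ x, s ((0:Fin d → ℤ) - x) * (g 0 - g x) ^ 2 = s x * (g x - g 0) ^ 2 := by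
      intro x
      rw [zero_sub, hsneg, ← neg_sub (g x) (g 0), neg_sq]
    have hinner2sum : Summable (fun x => s ((0:Fin d → ℤ) - x) * (g 0 - g x) ^ 2) := by
      apply hVsum.congr
      intro x
      rw [hinner2eq x]
    have hEle : (∑' x, ∑' y, (if x = 0 ∨ y = 0 then s (y - x) * (g y - g x) ^ 2 else 0)) ≤ V + V := by
      have ptR : ∀ x y, (if x = 0 ∨ y = 0 then s (y - x) * (g y - g x) ^ 2 else 0)
          ≤ (if x = 0 then s (y - 0) * (g y - g 0) ^ 2 else 0)
            + (if y = 0 then s ((0:Fin d → ℤ) - x) * (g 0 - g x) ^ 2 else 0) := by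
        intro x y
        by_cases hx : x = 0
        · subst hx
          rw [if_pos (Or.inl rfl), if_pos rfl]
          apply le_add_of_nonneg_right
          split
          · exact mul_nonneg (hsnn _) (sq_nonneg _)
          · exact le_refl 0
        by_cases hy : y = 0
        · subst hy
          rw [if_pos (Or.inr rfl), if_neg hx, if_pos rfl, zero_add]
        · rw [if_neg (by tauto), if_neg hx, if_neg hy, add_zero]
      have hif1sum : ∀ x : Fin d → ℤ, Summable (fun y : Fin d → ℤ => if x = 0 then s (y - 0) * (g y - g 0) ^ 2 else 0) := by
        intro x
        by_cases hx : x = 0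
        · apply hVsum'.congr; intro y; rw [if_pos hx]
        · apply summable_zero.congr; intro y; rw [if_neg hx]
      have hif2sum : ∀ x : Fin d → ℤ, Summable (fun y : Fin d → ℤ => if y = 0 then s ((0:Fin d → ℤ) - x) * (g 0 - g x) ^ 2 else 0) := by
        intro x
        apply hsum_of
        intro y hy
        have hy0 : y ≠ 0 := by intro h; exact hy (Or.inr (by simp [h]))
        rw [if_neg hy0]
      have innerle : ∀ x, (∑' y, (if x = 0 ∨ y = 0 then s (y - x) * (g y - g x) ^ 2 else 0))
          ≤ (if x = 0 then V else 0) + s ((0:Fin d → ℤ) - x) * (g 0 - g x) ^ 2 := by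
        intro x
        have step := Summable.tsum_le_tsum (ptR x) (hRinner x) ((hif1sum x).add (hif2sum x))
        rw [Summable.tsum_add (hif1sum x) (hif2sum x)] at step
        have e1 : (∑' y : Fin d → ℤ, if x = 0 then s (y - 0) * (g y - g 0) ^ 2 else 0) = (if x = 0 then V else 0) := by
          by_cases hx : x = 0
          · rw [if_pos hx, ← hW]
            apply tsum_congr; intro y; rw [if_pos hx]
          · rw [if_neg hx]
            rw [show (fun y : Fin d → ℤ => if x = 0 then s (y - 0) * (g y - g 0) ^ 2 else 0) = fun _ => (0:ℝ) by
              funext y; rw [if_neg hx]]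
            exact tsum_zero
        have e2 : (∑' y : Fin d → ℤ, if y = 0 then s ((0:Fin d → ℤ) - x) * (g 0 - g x) ^ 2 else 0)
            = s ((0:Fin d → ℤ) - x) * (g 0 - g x) ^ 2 := tsum_ite_eq 0 _
        rw [e1, e2] at step
        exact step
      have houtersum : Summable (fun x => (if x = 0 then V else 0) + s ((0:Fin d → ℤ) - x) * (g 0 - g x) ^ 2) := by
        apply Summable.add _ hinner2sum
        apply hsum_of
        intro x hx
        have hx0 : x ≠ 0 := by intro h; exact hx (Or.inr (by simp [h]))
        rw [if_neg hx0]
      have step2 := Summable.tsum_le_tsum innerle hRouter houtersum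
      have e3 : (∑' x, ((if x = 0 then V else 0) + s ((0:Fin d → ℤ) - x) * (g 0 - g x) ^ 2)) = V + V := by
        rw [Summable.tsum_add _ hinner2sum]
        · congr 1
          · exact tsum_ite_eq 0 (fun _ => V)
          · rw [hV]
            exact tsum_congr hinner2eq
        · apply hsum_of
          intro x hx
          have hx0 : x ≠ 0 := by intro h; exact hx (Or.inr (by simp [h]))
          rw [if_neg hx0]
      rw [e3] at step2
      exact step2
    have hDΦle : DΦ ≤ DΨ + 2 * (K * DΨ) := by
      rw [hsplitD]
      have : (∑' x, ∑' y, (if x = 0 ∨ y = 0 then s (y - x) * (g y - g x) ^ 2 else 0)) ≤ 2 * (K * DΨ) := by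
        calc (∑' x, ∑' y, (if x = 0 ∨ y = 0 then s (y - x) * (g y - g x) ^ 2 else 0)) ≤ V + V := hEle
          _ ≤ K * DΨ + K * DΨ := add_le_add hVleK hVleK
          _ = 2 * (K * DΨ) := by ring
      linarith
    -- conclude
    have hfin1 : lam * G2 ≤ lam * (2 * T1) := mul_le_mul_of_nonneg_left hG2le hlam.le
    have hfin2 : (1/4 : ℝ) * DΦ ≤ (1/4) * (DΨ + 2 * (K * DΨ)) := by linarith
    have hfin3 : 0 ≤ K * DΨ := mul_nonneg hK0 hDΨnn
    have hfin4 : 0 ≤ lam * T1 := mul_nonneg hlam.le hT1nn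
    have hfin5 : 0 ≤ K * (lam * T1) := mul_nonneg hK0 hfin4
    clear_value K s S T1 DΨ DΦ G2 V
    refine le_trans (add_le_add hfin1 hfin2) ?_
    have expand : (2 + 2 * K) * (lam * T1 + 1 / 4 * DΨ)
        = lam * (2 * T1) + 1 / 4 * (DΨ + 2 * (K * DΨ)) + (2 * (K * (lam * T1)) + 1 / 4 * DΨ) := by
      ring
    rw [expand]
    have hpos : 0 ≤ 2 * (K * (lam * T1)) + 1 / 4 * DΨ := by positivity
    linarith only [hpos]

/-- the quadratic forms `Q(f)` (on `ℤ^d \ {0}`) and `Q_ext(f_ext)` (on `ℤ^d`,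
where `f_ext` extends `f` by `f_ext(0) = Σ_{x≠0} s(x) f(x)`) are comparable:
`Q(f) ≤ Q_ext(f_ext) ≤ C·Q(f)` with `C = C(d,α)` independent of `λ > 0` and `f`. -/
theorem statement18 (d : ℕ) (hd : 1 ≤ d) (α : ℝ) (hα : 0 < α) :
    ∃ C : ℝ, ∀ lam : ℝ, 0 < lam →
      ∀ f : (Fin d → ℤ) → ℝ, (Function.support f).Finite →
      ∀ g : (Fin d → ℤ) → ℝ,
        (∀ x : Fin d → ℤ, x ≠ 0 → g x = f x) →
        (g 0 = ∑' x : Fin d → ℤ, sfun d α x * f x) →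
        (lam * (∑' x : Fin d → ℤ, (if x ≠ 0 then f x ^ 2 else 0))
            + (1 / 4) * ∑' x : Fin d → ℤ, ∑' y : Fin d → ℤ,
                (if x ≠ 0 ∧ y ≠ 0 then sfun d α (y - x) * (f y - f x) ^ 2 else 0))
          ≤ (lam * (∑' x : Fin d → ℤ, g x ^ 2)
            + (1 / 4) * ∑' x : Fin d → ℤ, ∑' y : Fin d → ℤ,
                sfun d α (y - x) * (g y - g x) ^ 2) ∧
        (lam * (∑' x : Fin d → ℤ, g x ^ 2)
            + (1 / 4) * ∑' x : Fin d → ℤ, ∑' y : Fin d → ℤ,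
                sfun d α (y - x) * (g y - g x) ^ 2)
          ≤ C * (lam * (∑' x : Fin d → ℤ, (if x ≠ 0 then f x ^ 2 else 0))
            + (1 / 4) * ∑' x : Fin d → ℤ, ∑' y : Fin d → ℤ,
                (if x ≠ 0 ∧ y ≠ 0 then sfun d α (y - x) * (f y - f x) ^ 2 else 0)) := by
  exact statement18_aux d hd α hα
end

section
/- Let d ≥ 1 and n ≥ 1. Let 𝔣 : ℰ_{d,n} → ℝ be finitely supported, and define F : ℤ^d \ {0} → [0,∞) by F(z) = ( Σ_{A∈ℰ_{d,n}, z∈A} 𝔣(A)² )^{1/2}. Then for all distinct nonzero x, y ∈ ℤ^d, (F(y) − F(x))² ≤ Σ_{A∈ℰ_{d,n}, x∈A, y∉A} ( 𝔣((A \ {x}) ∪ {y}) − 𝔣(A) )². -/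
section Aux

lemma aux_rev_triangle {ι : Type*} (u v : ι → ℝ) (hu : (Function.support u).Finite)
    (hv : (Function.support v).Finite) :
    (Real.sqrt (∑' i, u i ^ 2) - Real.sqrt (∑' i, v i ^ 2)) ^ 2 ≤ ∑' i, (u i - v i) ^ 2 := by
  classical
  set s := hu.toFinset ∪ hv.toFinset with hs
  have hmem : ∀ i, i ∉ s → u i = 0 ∧ v i = 0 := by
    intro i hi
    simp only [hs, Finset.mem_union, Set.Finite.mem_toFinset, Function.mem_support, not_or,
      not_not] at hi
    exact hi
  rw [tsum_eq_sum (s := s) (f := fun i => u i ^ 2) (fun i hi => by simp [(hmem i hi).1]),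
      tsum_eq_sum (s := s) (f := fun i => v i ^ 2) (fun i hi => by simp [(hmem i hi).2]),
      tsum_eq_sum (s := s) (f := fun i => (u i - v i) ^ 2)
        (fun i hi => by simp [(hmem i hi).1, (hmem i hi).2])]
  have hU : 0 ≤ ∑ i ∈ s, u i ^ 2 := Finset.sum_nonneg fun i _ => sq_nonneg _
  have hV : 0 ≤ ∑ i ∈ s, v i ^ 2 := Finset.sum_nonneg fun i _ => sq_nonneg _
  have hUV : ∑ i ∈ s, u i * v i
      ≤ Real.sqrt (∑ i ∈ s, u i ^ 2) * Real.sqrt (∑ i ∈ s, v i ^ 2) := by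
    rcases le_or_gt (∑ i ∈ s, u i * v i) 0 with h | h
    · exact h.trans (mul_nonneg (Real.sqrt_nonneg _) (Real.sqrt_nonneg _))
    · calc ∑ i ∈ s, u i * v i = Real.sqrt ((∑ i ∈ s, u i * v i) ^ 2) := by
            rw [Real.sqrt_sq h.le]
        _ ≤ Real.sqrt ((∑ i ∈ s, u i ^ 2) * ∑ i ∈ s, v i ^ 2) :=
            Real.sqrt_le_sqrt (Finset.sum_mul_sq_le_sq_mul_sq s u v)
        _ = _ := Real.sqrt_mul hU _
  have h1 : Real.sqrt (∑ i ∈ s, u i ^ 2) ^ 2 = ∑ i ∈ s, u i ^ 2 := Real.sq_sqrt hU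
  have h2 : Real.sqrt (∑ i ∈ s, v i ^ 2) ^ 2 = ∑ i ∈ s, v i ^ 2 := Real.sq_sqrt hV
  have h3 : ∑ i ∈ s, (u i - v i) ^ 2
      = (∑ i ∈ s, u i ^ 2) - 2 * (∑ i ∈ s, u i * v i) + ∑ i ∈ s, v i ^ 2 := by
    rw [Finset.mul_sum, ← Finset.sum_sub_distrib, ← Finset.sum_add_distrib]
    exact Finset.sum_congr rfl fun i _ => by ring
  nlinarith [h1, h2, h3, hUV]

variable {V : Type*} [DecidableEq V]

/-- swap the roles of `x` and `y` in `A`. -/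
def swapSet (x y : V) (A : Finset V) : Finset V :=
  if x ∈ A ∧ y ∉ A then insert y (A.erase x)
  else if y ∈ A ∧ x ∉ A then insert x (A.erase y) else A

lemma swapSet_mem_x {x y : V} (hxy : x ≠ y) (A : Finset V) :
    x ∈ swapSet x y A ↔ y ∈ A := by
  unfold swapSet
  split_ifs with h1 h2
  · simp [hxy, h1.1, h1.2, Finset.mem_insert, Finset.mem_erase]
  · simp [h2.1]
  · push_neg at h1 h2
    constructor
    · intro hxA; exact h1 hxA
    · intro hyA; exact h2 hyA

lemma swapSet_mem_y {x y : V} (hxy : x ≠ y) (A : Finset V) :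
    y ∈ swapSet x y A ↔ x ∈ A := by
  unfold swapSet
  split_ifs with h1 h2
  · simp [h1.1]
  · simp [hxy.symm, h2.1, h2.2, Finset.mem_insert, Finset.mem_erase]
  · push_neg at h1 h2
    constructor
    · intro hyA; exact h2 hyA
    · intro hxA; exact h1 hxA

lemma swapSet_mem_other {x y z : V} (hzx : z ≠ x) (hzy : z ≠ y) (A : Finset V) :
    z ∈ swapSet x y A ↔ z ∈ A := by
  unfold swapSet
  split_ifs with h1 h2
  · simp [Finset.mem_insert, Finset.mem_erase, hzx, hzy]
  · simp [Finset.mem_insert, Finset.mem_erase, hzx, hzy]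
  · rfl

lemma swapSet_card (x y : V) (A : Finset V) : (swapSet x y A).card = A.card := by
  unfold swapSet
  split_ifs with h1 h2
  · rw [Finset.card_insert_of_notMem (fun hc => h1.2 (Finset.mem_of_mem_erase hc)),
      Finset.card_erase_of_mem h1.1]
    have : 1 ≤ A.card := Finset.card_pos.2 ⟨x, h1.1⟩
    omega
  · rw [Finset.card_insert_of_notMem (fun hc => h2.2 (Finset.mem_of_mem_erase hc)),
      Finset.card_erase_of_mem h2.1]
    have : 1 ≤ A.card := Finset.card_pos.2 ⟨y, h2.1⟩
    omega
  · rfl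

lemma swapSet_eq_of_mem {x y : V} {A : Finset V} (hx : x ∈ A) (hy : y ∉ A) :
    swapSet x y A = insert y (A.erase x) := if_pos ⟨hx, hy⟩

lemma swapSet_eq_of_mem' {x y : V} {A : Finset V} (hy : y ∈ A) (hx : x ∉ A) :
    swapSet x y A = insert x (A.erase y) := by
  unfold swapSet
  rw [if_neg (fun hc => hx hc.1), if_pos ⟨hy, hx⟩]

lemma swapSet_eq_self {x y : V} {A : Finset V} (h : (x ∈ A ↔ y ∈ A)) :
    swapSet x y A = A := by
  unfold swapSet
  rw [if_neg (fun hc => hc.2 (h.1 hc.1)), if_neg (fun hc => hc.2 (h.2 hc.1))]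

lemma swapSet_involutive {x y : V} (hxy : x ≠ y) (A : Finset V) :
    swapSet x y (swapSet x y A) = A := by
  by_cases hxA : x ∈ A <;> by_cases hyA : y ∈ A
  · have h := swapSet_eq_self (x := x) (y := y) (A := A) (iff_of_true hxA hyA)
    rw [h, h]
  · rw [swapSet_eq_of_mem hxA hyA]
    have hyE : y ∉ A.erase x := fun hc => hyA (Finset.mem_of_mem_erase hc)
    have h1 : y ∈ insert y (A.erase x) := Finset.mem_insert_self _ _
    have h2 : x ∉ insert y (A.erase x) := by
      simp [Finset.mem_insert, Finset.mem_erase, hxy]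
    rw [swapSet_eq_of_mem' h1 h2, Finset.erase_insert hyE, Finset.insert_erase hxA]
  · rw [swapSet_eq_of_mem' hyA hxA]
    have hxE : x ∉ A.erase y := fun hc => hxA (Finset.mem_of_mem_erase hc)
    have h1 : x ∈ insert x (A.erase y) := Finset.mem_insert_self _ _
    have h2 : y ∉ insert x (A.erase y) := by
      simp [Finset.mem_insert, Finset.mem_erase, hxy.symm]
    rw [swapSet_eq_of_mem h1 h2, Finset.erase_insert hxE, Finset.insert_erase hyA]
  · have h := swapSet_eq_self (x := x) (y := y) (A := A) (iff_of_false hxA hyA)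
    rw [h, h]

end Aux

/-- with `F(z) = (Σ_{A∈ℰ_{d,n}, z∈A} 𝔣(A)²)^{1/2}`, for distinct nonzero
`x, y ∈ ℤ^d` one has
`(F(y) − F(x))² ≤ Σ_{A∈ℰ_{d,n}, x∈A, y∉A} (𝔣((A \ {x}) ∪ {y}) − 𝔣(A))²`. -/
theorem statement19 (d n : ℕ) (hd : 1 ≤ d) (hn : 1 ≤ n)
    (f : Finset (Fin d → ℤ) → ℝ) (hf : (Function.support f).Finite)
    (x y : Fin d → ℤ) (hx : x ≠ 0) (hy : y ≠ 0) (hxy : x ≠ y) :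
    (Real.sqrt (∑' A : {A : Finset (Fin d → ℤ) // A.card = n ∧ (0 : Fin d → ℤ) ∉ A},
        (if y ∈ A.1 then f A.1 ^ 2 else 0))
      - Real.sqrt (∑' A : {A : Finset (Fin d → ℤ) // A.card = n ∧ (0 : Fin d → ℤ) ∉ A},
        (if x ∈ A.1 then f A.1 ^ 2 else 0))) ^ 2
    ≤ ∑' A : {A : Finset (Fin d → ℤ) // A.card = n ∧ (0 : Fin d → ℤ) ∉ A},
        (if x ∈ A.1 ∧ y ∉ A.1 then (f (insert y (A.1.erase x)) - f A.1) ^ 2 else 0) := by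
  classical
  set S := {A : Finset (Fin d → ℤ) // A.card = n ∧ (0 : Fin d → ℤ) ∉ A} with hS
  have hmemS : ∀ A : S, (swapSet x y A.1).card = n ∧ (0 : Fin d → ℤ) ∉ swapSet x y A.1 := by
    intro A
    refine ⟨(swapSet_card x y A.1).trans A.2.1, ?_⟩
    rw [swapSet_mem_other (fun hc => hx hc.symm) (fun hc => hy hc.symm)]
    exact A.2.2
  set τ : S → S := fun A => ⟨swapSet x y A.1, hmemS A⟩ with hτdef
  have hτval : ∀ A : S, (τ A).1 = swapSet x y A.1 := fun _ => rfl
  have hτinv : Function.Involutive τ := by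
    intro A
    apply Subtype.ext
    rw [hτval, hτval]
    exact swapSet_involutive hxy A.1
  set e : Equiv.Perm S := hτinv.toPerm with he
  have heval : ∀ A : S, ((e A : S) : Finset (Fin d → ℤ)) = swapSet x y A.1 := fun _ => rfl
  set u : S → ℝ := fun A => if y ∈ A.1 then f A.1 else 0 with hu
  set v : S → ℝ := fun A => if y ∈ A.1 then f (swapSet x y A.1) else 0 with hv
  have hufin : (Function.support u).Finite := by
    have hsub : Function.support u ⊆ (fun A : S => A.1) ⁻¹' Function.support f := by
      intro A hA
      simp only [Function.mem_support, hu] at hA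
      simp only [Set.mem_preimage, Function.mem_support]
      intro hc
      apply hA
      split_ifs with h
      · exact hc
      · rfl
    exact (hf.preimage (Subtype.val_injective.injOn)).subset hsub
  have hvfin : (Function.support v).Finite := by
    have hinj : Function.Injective (fun A : S => swapSet x y A.1) := by
      intro A B hAB
      have : swapSet x y (swapSet x y A.1) = swapSet x y (swapSet x y B.1) := by
        simp only at hAB; rw [hAB]
      rw [swapSet_involutive hxy, swapSet_involutive hxy] at this
      exact Subtype.ext this
    have hsub : Function.support v ⊆ (fun A : S => swapSet x y A.1) ⁻¹' Function.support f := by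
      intro A hA
      simp only [Function.mem_support, hv] at hA
      simp only [Set.mem_preimage, Function.mem_support]
      intro hc
      apply hA
      split_ifs with h
      · exact hc
      · rfl
    exact (hf.preimage (hinj.injOn)).subset hsub
  have E1 : ∑' A : S, (if y ∈ A.1 then f A.1 ^ 2 else 0) = ∑' A : S, u A ^ 2 := by
    apply tsum_congr
    intro A
    simp only [hu]
    split_ifs <;> simp
  have E2 : ∑' A : S, (if x ∈ A.1 then f A.1 ^ 2 else 0) = ∑' A : S, v A ^ 2 := by
    rw [← Equiv.tsum_eq e (fun A : S => if x ∈ A.1 then f A.1 ^ 2 else 0)]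
    apply tsum_congr
    intro A
    simp only [heval, hv]
    have hm : x ∈ swapSet x y A.1 ↔ y ∈ A.1 := swapSet_mem_x hxy A.1
    split_ifs with h1 h2 h2
    · rfl
    · exact absurd (hm.1 h1) h2
    · exact absurd (hm.2 h2) h1
    · simp
  have E3 : ∑' A : S, (if x ∈ A.1 ∧ y ∉ A.1 then (f (insert y (A.1.erase x)) - f A.1) ^ 2 else 0)
      = ∑' A : S, (u A - v A) ^ 2 := by
    rw [← Equiv.tsum_eq e
      (fun A : S => if x ∈ A.1 ∧ y ∉ A.1 then (f (insert y (A.1.erase x)) - f A.1) ^ 2 else 0)]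
    apply tsum_congr
    intro A
    simp only [heval, hu, hv]
    have hmx : x ∈ swapSet x y A.1 ↔ y ∈ A.1 := swapSet_mem_x hxy A.1
    have hmy : y ∈ swapSet x y A.1 ↔ x ∈ A.1 := swapSet_mem_y hxy A.1
    by_cases hyA : y ∈ A.1
    · by_cases hxA : x ∈ A.1
      · rw [if_neg (fun hc => hc.2 (hmy.2 hxA)), if_pos hyA, if_pos hyA,
          swapSet_eq_self (iff_of_true hxA hyA)]
        ring
      · rw [if_pos ⟨hmx.2 hyA, fun hc => hxA (hmy.1 hc)⟩, if_pos hyA, if_pos hyA]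
        have hτA : swapSet x y A.1 = insert x (A.1.erase y) := swapSet_eq_of_mem' hyA hxA
        have hback : insert y ((swapSet x y A.1).erase x) = A.1 := by
          rw [hτA, Finset.erase_insert (fun hc => hxA (Finset.mem_of_mem_erase hc)),
            Finset.insert_erase hyA]
        rw [hback]
    · rw [if_neg (fun hc => hyA (hmx.1 hc.1)), if_neg hyA, if_neg hyA]
      ring
  rw [E1, E2, E3]
  exact aux_rev_triangle u v hufin hvfin
end
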